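/- arXiv:math/0501085 — 3 statements merged into one kernel-verified Lean document; each statement's English description precedes it below -/
import Mathlib

section
/- Assume the inductive setting, with f an element of Sym(Z), and let V be the subgroup of Sym(Z) generated by H₁ together with f. Then (Z, Y₁ ∪ Supp(f), V, W₀) is a pre-wreath structure, and its carrier {W₀v : v ∈ V} equals the union over n ∈ ℤ of the families {W₀rfⁿ : r ∈ R₁}. -/
/-- A pre-wreath structure `(Z, Y, H, X)`: `H` is a nontrivial subgroup of `Sym(Z)`,
`X ⊆ Y ⊆ Z`, `X` nonempty, every element of `H` fixes every point outside `Y`,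
if `Xh` meets `X` then `h` is the identity on `X`, and every nontrivial `h ∈ H`
moves some set `Xj` (`j ∈ H`). (Images are written with Lean's left action, so the
set `Xh` of the paper is `⇑h '' X`.) -/
def IsPreWreath {Z : Type*} (Y : Set Z) (H : Subgroup (Equiv.Perm Z)) (X : Set Z) : Prop :=
  H ≠ ⊥ ∧
  (∀ h ∈ H, ∀ z : Z, z ∉ Y → h z = z) ∧
  X ⊆ Y ∧
  X.Nonempty ∧
  (∀ h ∈ H, (⇑h '' X ∩ X).Nonempty → ∀ x ∈ X, h x = x) ∧
  (∀ h ∈ H, h ≠ 1 → ∃ j ∈ H, ⇑h '' (⇑j '' X) ≠ ⇑j '' X)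

/-- The carrier `XH = {Xh : h ∈ H}` of a pre-wreath structure. -/
def wreathCarrier {Z : Type*} (H : Subgroup (Equiv.Perm Z)) (X : Set Z) : Set (Set Z) :=
  {A : Set Z | ∃ h ∈ H, A = ⇑h '' X}

/-- The support of a subgroup of `Sym(Z)`: the points moved by some element. -/
def Supp {Z : Type*} (K : Subgroup (Equiv.Perm Z)) : Set Z :=
  {z : Z | ∃ g ∈ K, g z ≠ z}

/-- The inductive setting: `(Z, fY₀, H₁, Y₀)` is a pre-wreath structure (`Y₁ = Y₀f` is
the image of `Y₀` under the bijection `f`), `Y₀ ⊆ Supp(H₁) ⊆ Y₁` with `Supp(H₁) ≠ Y₁`,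
and `W₀` is a nonempty subset of `Y₀` whose image under `f` misses `Supp(H₁)`. -/
def InductiveSetting {Z : Type*} (H₁ : Subgroup (Equiv.Perm Z)) (f : Equiv.Perm Z)
    (Y₀ W₀ : Set Z) : Prop :=
  IsPreWreath (⇑f '' Y₀) H₁ Y₀ ∧
  Y₀ ⊆ Supp H₁ ∧ Supp H₁ ⊆ ⇑f '' Y₀ ∧ Supp H₁ ≠ ⇑f '' Y₀ ∧
  W₀.Nonempty ∧ W₀ ⊆ Y₀ ∧ (⇑f '' W₀) ∩ Supp H₁ = ∅

/-- `Hᵢ`, the conjugate of `H₁` carried over by `f^(i-1)`: this is the paper's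
`f^{-(i-1)} H₁ f^{i-1}` written in right-action notation, i.e. the subgroup
`{f^(i-1) h f^(-(i-1)) : h ∈ H₁}` of permutations acting on the left. -/
def Hseq {Z : Type*} (H₁ : Subgroup (Equiv.Perm Z)) (f : Equiv.Perm Z) (i : ℤ) :
    Subgroup (Equiv.Perm Z) :=
  Subgroup.map (MulAut.conj (f ^ (i - 1))).toMonoidHom H₁

/-- `R_j`, the subgroup generated by the `Hᵢ` with `i ≥ j`. -/
def Rseq {Z : Type*} (H₁ : Subgroup (Equiv.Perm Z)) (f : Equiv.Perm Z) (j : ℤ) :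
    Subgroup (Equiv.Perm Z) :=
  Subgroup.closure (⋃ i ∈ {i : ℤ | j ≤ i}, (Hseq H₁ f i : Set (Equiv.Perm Z)))

/-- `Lᵢ`, the subgroup generated by the `H_j` with `j < i`. -/
def Lseq {Z : Type*} (H₁ : Subgroup (Equiv.Perm Z)) (f : Equiv.Perm Z) (i : ℤ) :
    Subgroup (Equiv.Perm Z) :=
  Subgroup.closure (⋃ j ∈ {j : ℤ | j < i}, (Hseq H₁ f j : Set (Equiv.Perm Z)))

/-- `M`, the subgroup generated by all the `Hᵢ`, `i ∈ ℤ`. -/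
def Mgrp {Z : Type*} (H₁ : Subgroup (Equiv.Perm Z)) (f : Equiv.Perm Z) :
    Subgroup (Equiv.Perm Z) :=
  Subgroup.closure (⋃ i : ℤ, (Hseq H₁ f i : Set (Equiv.Perm Z)))

/-- `Wᵢ = W₀fⁱ`, the image of `W₀` under the `i`-th power of `f`. -/
def Wseq {Z : Type*} (W₀ : Set Z) (f : Equiv.Perm Z) (i : ℤ) : Set Z :=
  ⇑(f ^ i) '' W₀


set_option linter.unusedSectionVars false
set_option linter.unusedTactic false
set_option linter.unusedVariables false
section

namespace Stmt15

open Set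

variable {Z : Type*}

lemma mul_img (u v : Equiv.Perm Z) (X : Set Z) : ⇑(u * v) '' X = ⇑u '' (⇑v '' X) := by
  rw [Set.image_image]; rfl

lemma perm_img_inter (u : Equiv.Perm Z) (A B : Set Z) : ⇑u '' (A ∩ B) = ⇑u '' A ∩ ⇑u '' B :=
  Set.image_inter u.injective

lemma perm_img_disj {A B : Set Z} (u : Equiv.Perm Z) (h : A ∩ B = ∅) :
    ⇑u '' A ∩ ⇑u '' B = ∅ := by
  rw [← perm_img_inter, h, Set.image_empty]

lemma perm_img_ne {A B : Set Z} (u : Equiv.Perm Z) (h : A ≠ B) : ⇑u '' A ≠ ⇑u '' B := by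
  intro he; exact h ((Set.image_injective.mpr u.injective) he)

lemma inv_img_img (u : Equiv.Perm Z) (X : Set Z) : ⇑u⁻¹ '' (⇑u '' X) = X := by
  rw [← mul_img]; simp

lemma fix_inv {g : Equiv.Perm Z} {z : Z} (h : g z = z) : g⁻¹ z = z := by
  conv_lhs => rw [← h]
  simp

lemma fix_img {g : Equiv.Perm Z} {P : Set Z} (h : ∀ z ∈ P, g z = z) : ⇑g '' P = P := by
  apply Set.Subset.antisymm
  · rintro _ ⟨z, hz, rfl⟩; rw [h z hz]; exact hz
  · intro z hz; exact ⟨z, hz, h z hz⟩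

lemma ne_of_disj_nonempty {A B : Set Z} (h : A ∩ B = ∅) (hA : A.Nonempty) : A ≠ B := by
  intro he
  obtain ⟨z, hz⟩ := hA
  have : z ∈ A ∩ B := ⟨hz, he ▸ hz⟩
  rw [h] at this
  exact this

lemma perm_ne_one_iff {g : Equiv.Perm Z} : g ≠ 1 ↔ ∃ z, g z ≠ z := by
  constructor
  · intro h
    by_contra hc
    push_neg at hc
    exact h (Equiv.ext fun z => hc z)
  · rintro ⟨z, hz⟩ rfl
    exact hz rfl

/-- The subgroup of permutations fixing every point outside `U`. -/
def fixingOutside (U : Set Z) : Subgroup (Equiv.Perm Z) where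
  carrier := {g | ∀ z, z ∉ U → g z = z}
  one_mem' := fun _ _ => rfl
  mul_mem' := by
    intro a b ha hb z hz
    simp only [Equiv.Perm.mul_apply]
    rw [hb z hz, ha z hz]
  inv_mem' := by
    intro a ha z hz
    exact fix_inv (ha z hz)

lemma mem_fixingOutside {U : Set Z} {g : Equiv.Perm Z} :
    g ∈ fixingOutside U ↔ ∀ z, z ∉ U → g z = z := Iff.rfl

lemma fixingOutside_mono {U V : Set Z} (h : U ⊆ V) : fixingOutside U ≤ fixingOutside V :=
  fun _ hg z hz => hg z fun hu => hz (h hu)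

lemma mem_preserve {U : Set Z} {g : Equiv.Perm Z} (hg : g ∈ fixingOutside U) {z : Z}
    (hz : z ∈ U) : g z ∈ U := by
  by_contra hgz
  have h2 : g (g z) = g z := hg _ hgz
  have h3 : g z = z := g.injective h2
  rw [h3] at hgz
  exact hgz hz

lemma notmem_of_fixes {g : Equiv.Perm Z} {P : Set Z} (h : ∀ z ∈ P, g z = z) {z : Z}
    (hz : z ∉ P) : g z ∉ P := by
  intro hmem
  have h2 : g (g z) = g z := h _ hmem
  have h3 : g z = z := g.injective h2
  rw [h3] at hmem
  exact hz hmem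

lemma zz (f : Equiv.Perm Z) (a b : ℤ) (z : Z) : (f ^ a) ((f ^ b) z) = (f ^ (a + b)) z := by
  rw [zpow_add]; rfl

end Stmt15
namespace Stmt15

open Set

variable {Z : Type*} {H₁ : Subgroup (Equiv.Perm Z)} {f : Equiv.Perm Z} {Y₀ W₀ : Set Z}

lemma Wseq_zero (X : Set Z) : Wseq X f 0 = X := by
  simp [Wseq]

lemma Wseq_add (X : Set Z) (a b : ℤ) : Wseq X f (a + b) = ⇑(f ^ a) '' Wseq X f b := by
  rw [Wseq, Wseq, zpow_add, mul_img]

lemma mem_Wseq_iff {X : Set Z} {i : ℤ} {z : Z} : z ∈ Wseq X f i ↔ (f ^ (-i)) z ∈ X := by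
  rw [Wseq]
  constructor
  · rintro ⟨x, hx, rfl⟩
    simpa [zpow_neg] using hx
  · intro h
    exact ⟨_, h, by simp [zpow_neg]⟩

lemma mem_Wseq_shift {X : Set Z} {a : ℤ} (b : ℤ) {z : Z} :
    (f ^ b) z ∈ Wseq X f (b + a) ↔ z ∈ Wseq X f a := by
  rw [mem_Wseq_iff, mem_Wseq_iff, zz]
  have h : -(b + a) + b = -a := by ring
  rw [h]


lemma shift_mem {X : Set Z} {a b : ℤ} {z : Z} (h : (f ^ b) z ∈ Wseq X f a) :
    z ∈ Wseq X f (a - b) := by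
  rw [mem_Wseq_iff] at h ⊢
  rw [zz] at h
  have he : -a + b = -(a - b) := by ring
  rwa [he] at h

lemma shift_mem' {X : Set Z} {a : ℤ} (b : ℤ) {z : Z} (h : z ∈ Wseq X f a) :
    (f ^ b) z ∈ Wseq X f (a + b) := by
  rw [mem_Wseq_iff, zz]
  have he : -(a + b) + b = -a := by ring
  rw [he]
  exact mem_Wseq_iff.mp h

lemma Wseq_mono {X X' : Set Z} (h : X ⊆ X') (i : ℤ) : Wseq X f i ⊆ Wseq X' f i :=
  Set.image_mono h

section Setting

variable (hs : InductiveSetting H₁ f Y₀ W₀)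
include hs

lemma Y1_eq : Wseq Y₀ f 1 = ⇑f '' Y₀ := by rw [Wseq, zpow_one]

lemma Y0_sub_Supp : Y₀ ⊆ Supp H₁ := hs.2.1

lemma Supp_sub_Y1 : Supp H₁ ⊆ Wseq Y₀ f 1 := by
  rw [Y1_eq hs]; exact hs.2.2.1

lemma Y0_sub_Y1 : Y₀ ⊆ Wseq Y₀ f 1 := (Y0_sub_Supp hs).trans (Supp_sub_Y1 hs)

lemma W0_sub_Y0 : W₀ ⊆ Y₀ := hs.2.2.2.2.2.1

lemma W0_nonempty : W₀.Nonempty := hs.2.2.2.2.1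

lemma Y0_nonempty : Y₀.Nonempty := (W0_nonempty hs).mono (W0_sub_Y0 hs)

lemma W1_disj_Supp : Wseq W₀ f 1 ∩ Supp H₁ = ∅ := by
  rw [Wseq, zpow_one]; exact hs.2.2.2.2.2.2

lemma Yz_mono : ∀ {i j : ℤ}, i ≤ j → Wseq Y₀ f i ⊆ Wseq Y₀ f j := by
  have step : ∀ k : ℤ, Wseq Y₀ f k ⊆ Wseq Y₀ f (k + 1) := by
    intro k
    have h1 : Wseq Y₀ f (k + 1) = ⇑(f ^ k) '' Wseq Y₀ f 1 := Wseq_add Y₀ k 1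
    rw [h1, Wseq]
    exact Set.image_mono (Y0_sub_Y1 hs)
  intro i j hij
  obtain ⟨n, hn⟩ : ∃ n : ℕ, j = i + n := ⟨(j - i).toNat, by omega⟩
  subst hn
  clear hij
  induction n with
  | zero => simp
  | succ n ih =>
      refine ih.trans ?_
      have h : i + ((n : ℤ) + 1) = (i + n) + 1 := by ring
      have h2 : (((n + 1 : ℕ)) : ℤ) = (n : ℤ) + 1 := by push_cast; ring
      rw [h2, h]
      exact step (i + n)

lemma H1_fixingOutside : H₁ ≤ fixingOutside (Wseq Y₀ f 1) := by
  intro g hg z hz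
  exact hs.1.2.1 g hg z (by rwa [Y1_eq hs] at hz)

lemma H1_fix_ptwise {g : Equiv.Perm Z} (hg : g ∈ H₁) (hne : (⇑g '' Y₀ ∩ Y₀).Nonempty) :
    ∀ x ∈ Y₀, g x = x := hs.1.2.2.2.2.1 g hg hne

lemma H1_iii {g : Equiv.Perm Z} (hg : g ∈ H₁) (hg1 : g ≠ 1) :
    ∃ j ∈ H₁, ⇑g '' (⇑j '' Y₀) ≠ ⇑j '' Y₀ := hs.1.2.2.2.2.2 g hg hg1

lemma H1_maps_Supp {g : Equiv.Perm Z} (hg : g ∈ H₁) {z : Z} (hz : z ∈ Supp H₁) :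
    g z ∈ Supp H₁ := by
  obtain ⟨h, hh, hzz⟩ := hz
  refine ⟨g * h * g⁻¹, mul_mem (mul_mem hg hh) (inv_mem hg), ?_⟩
  simp only [Equiv.Perm.mul_apply, (show ∀ (e : Equiv.Perm Z) (x : Z), e⁻¹ (e x) = x from fun e x => e.symm_apply_apply x)]
  exact fun hc => hzz (g.injective hc)

lemma H1_trans_eq_or_disj {g₁ g₂ : Equiv.Perm Z} (hg₁ : g₁ ∈ H₁) (hg₂ : g₂ ∈ H₁) :
    ⇑g₁ '' Y₀ = ⇑g₂ '' Y₀ ∨ (⇑g₁ '' Y₀) ∩ (⇑g₂ '' Y₀) = ∅ := by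
  by_cases hne : ((⇑g₁ '' Y₀) ∩ (⇑g₂ '' Y₀)).Nonempty
  · left
    have hne2 : ((⇑(g₂⁻¹ * g₁) '' Y₀) ∩ Y₀).Nonempty := by
      obtain ⟨z, hz1, hz2⟩ := hne
      refine ⟨g₂⁻¹ z, ?_, ?_⟩
      · rw [mul_img]; exact Set.mem_image_of_mem _ hz1
      · obtain ⟨y, hy, rfl⟩ := hz2
        simpa using hy
    have hfix := H1_fix_ptwise hs (mul_mem (inv_mem hg₂) hg₁) hne2
    have himg : ⇑(g₂⁻¹ * g₁) '' Y₀ = Y₀ := fix_img hfix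
    calc ⇑g₁ '' Y₀ = ⇑g₂ '' (⇑(g₂⁻¹ * g₁) '' Y₀) := by
          rw [← mul_img]
          congr 1
          group
    _ = ⇑g₂ '' Y₀ := by rw [himg]
  · right; exact Set.not_nonempty_iff_eq_empty.mp hne

lemma W1_disj_Y0 : Wseq W₀ f 1 ∩ Y₀ = ∅ := by
  rw [← Set.subset_empty_iff, ← W1_disj_Supp hs]
  exact Set.inter_subset_inter_right _ (Y0_sub_Supp hs)

lemma Wk_disj_Yk1 (k : ℤ) : Wseq W₀ f k ∩ Wseq Y₀ f (k - 1) = ∅ := by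
  have h1 : Wseq W₀ f k = ⇑(f ^ (k - 1)) '' Wseq W₀ f 1 := by
    rw [← Wseq_add]; congr 1; ring
  have h2 : Wseq Y₀ f (k - 1) = ⇑(f ^ (k - 1)) '' Y₀ := by rw [Wseq]
  rw [h1, h2]
  exact perm_img_disj _ (W1_disj_Y0 hs)

lemma Wk_disj_Supp {k : ℤ} (hk : 1 ≤ k) : Wseq W₀ f k ∩ Supp H₁ = ∅ := by
  rcases eq_or_lt_of_le hk with h | h
  · rw [← h]; exact W1_disj_Supp hs
  · rw [← Set.subset_empty_iff, ← Wk_disj_Yk1 hs k]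
    refine Set.inter_subset_inter_right _ ((Supp_sub_Y1 hs).trans (Yz_mono hs (by omega)))

lemma W0_disj_Sk {k : ℤ} (hk : k ≤ 0) : W₀ ∩ (⇑(f ^ (k - 1)) '' Supp H₁) = ∅ := by
  have h1 : W₀ = ⇑(f ^ (k - 1)) '' Wseq W₀ f (1 - k) := by
    rw [← Wseq_add]
    have h : k - 1 + (1 - k) = 0 := by ring
    rw [h, Wseq_zero]
  rw [h1]
  exact perm_img_disj _ (Wk_disj_Supp hs (by omega))

lemma Wab_disj {a b : ℤ} (hab : a ≠ b) : Wseq W₀ f a ∩ Wseq W₀ f b = ∅ := by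
  have key : ∀ {a b : ℤ}, a < b → Wseq W₀ f a ∩ Wseq W₀ f b = ∅ := by
    intro a b h
    rw [Set.inter_comm, ← Set.subset_empty_iff, ← Wk_disj_Yk1 hs b]
    refine Set.inter_subset_inter_right _ ?_
    exact (Wseq_mono (W0_sub_Y0 hs) a).trans (Yz_mono hs (by omega))
  rcases lt_or_gt_of_ne hab with h | h
  · exact key h
  · rw [Set.inter_comm]; exact key h

end Setting

end Stmt15
namespace Stmt15

open Set

variable {Z : Type*} {H₁ : Subgroup (Equiv.Perm Z)} {f : Equiv.Perm Z} {Y₀ W₀ : Set Z}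

lemma perm_img_inter_nonempty (u : Equiv.Perm Z) {A B : Set Z} :
    ((⇑u '' A) ∩ (⇑u '' B)).Nonempty ↔ (A ∩ B).Nonempty := by
  rw [← perm_img_inter]; exact Set.image_nonempty

lemma mem_Hseq_iff {i : ℤ} {h : Equiv.Perm Z} :
    h ∈ Hseq H₁ f i ↔ ∃ g ∈ H₁, h = f ^ (i - 1) * g * (f ^ (i - 1))⁻¹ := by
  rw [Hseq, Subgroup.mem_map]
  constructor
  · rintro ⟨g, hg, rfl⟩
    exact ⟨g, hg, rfl⟩
  · rintro ⟨g, hg, rfl⟩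
    exact ⟨g, hg, rfl⟩

lemma mem_Hseq_intro {i : ℤ} {g : Equiv.Perm Z} (hg : g ∈ H₁) :
    f ^ (i - 1) * g * (f ^ (i - 1))⁻¹ ∈ Hseq H₁ f i :=
  mem_Hseq_iff.mpr ⟨g, hg, rfl⟩

lemma zpow_sub_inv (f : Equiv.Perm Z) (i : ℤ) : (f ^ (i - 1))⁻¹ = f ^ (1 - i) := by
  rw [← zpow_neg]; congr 1; ring

lemma Hseq_apply {i : ℤ} (g : Equiv.Perm Z) (z : Z) :
    (f ^ (i - 1) * g * (f ^ (i - 1))⁻¹) z = (f ^ (i - 1)) (g ((f ^ (1 - i)) z)) := by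
  rw [zpow_sub_inv]; rfl

lemma zpow_cancel_apply {a b : ℤ} (h : a + b = 0) (z : Z) : (f ^ a) ((f ^ b) z) = z := by
  rw [zz, h, zpow_zero]; rfl

lemma Hseq_img_Y {i : ℤ} (g : Equiv.Perm Z) :
    ⇑(f ^ (i - 1) * g * (f ^ (i - 1))⁻¹) '' Wseq Y₀ f (i - 1) = ⇑(f ^ (i - 1)) '' (⇑g '' Y₀) := by
  have hY : Wseq Y₀ f (i - 1) = ⇑(f ^ (i - 1)) '' Y₀ := rfl
  rw [hY, mul_img, mul_img, inv_img_img]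

section Setting

variable (hs : InductiveSetting H₁ f Y₀ W₀)
include hs

lemma Hseq_le_fixingOutside (i : ℤ) : Hseq H₁ f i ≤ fixingOutside (Wseq Y₀ f i) := by
  intro h hh z hz
  obtain ⟨g, hg, rfl⟩ := mem_Hseq_iff.mp hh
  rw [Hseq_apply]
  have hz' : (f ^ (1 - i)) z ∉ Wseq Y₀ f 1 := by
    intro hmem
    apply hz
    have h2 := shift_mem hmem
    have h3 : (1 : ℤ) - (1 - i) = i := by ring
    rwa [h3] at h2
  rw [(H1_fixingOutside hs) hg _ hz']
  exact zpow_cancel_apply (by ring) z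

lemma Hseq_fix_ptwise {i : ℤ} {h : Equiv.Perm Z} (hh : h ∈ Hseq H₁ f i)
    (hne : (⇑h '' Wseq Y₀ f (i - 1) ∩ Wseq Y₀ f (i - 1)).Nonempty) :
    ∀ x ∈ Wseq Y₀ f (i - 1), h x = x := by
  obtain ⟨g, hg, rfl⟩ := mem_Hseq_iff.mp hh
  have hY : Wseq Y₀ f (i - 1) = ⇑(f ^ (i - 1)) '' Y₀ := rfl
  have hne2 : (⇑g '' Y₀ ∩ Y₀).Nonempty := by
    rw [Hseq_img_Y, hY, perm_img_inter_nonempty] at hne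
    exact hne
  have hfix := H1_fix_ptwise hs hg hne2
  intro x hx
  rw [hY] at hx
  obtain ⟨y, hy, rfl⟩ := hx
  rw [Hseq_apply, zpow_cancel_apply (by ring), hfix y hy]

lemma Hseq_trans_eq_or_disj {i : ℤ} {h₁ h₂ : Equiv.Perm Z} (hh₁ : h₁ ∈ Hseq H₁ f i)
    (hh₂ : h₂ ∈ Hseq H₁ f i) :
    ⇑h₁ '' Wseq Y₀ f (i - 1) = ⇑h₂ '' Wseq Y₀ f (i - 1) ∨
      (⇑h₁ '' Wseq Y₀ f (i - 1)) ∩ (⇑h₂ '' Wseq Y₀ f (i - 1)) = ∅ := by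
  by_cases hne : ((⇑h₁ '' Wseq Y₀ f (i - 1)) ∩ (⇑h₂ '' Wseq Y₀ f (i - 1))).Nonempty
  · left
    have hne2 : ((⇑(h₂⁻¹ * h₁) '' Wseq Y₀ f (i - 1)) ∩ Wseq Y₀ f (i - 1)).Nonempty := by
      obtain ⟨z, hz1, hz2⟩ := hne
      refine ⟨h₂⁻¹ z, ?_, ?_⟩
      · rw [mul_img]; exact Set.mem_image_of_mem _ hz1
      · obtain ⟨y, hy, rfl⟩ := hz2
        simpa using hy
    have hfix := Hseq_fix_ptwise hs (mul_mem (inv_mem hh₂) hh₁) hne2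
    have himg : ⇑(h₂⁻¹ * h₁) '' Wseq Y₀ f (i - 1) = Wseq Y₀ f (i - 1) := fix_img hfix
    calc ⇑h₁ '' Wseq Y₀ f (i - 1) = ⇑h₂ '' (⇑(h₂⁻¹ * h₁) '' Wseq Y₀ f (i - 1)) := by
          rw [← mul_img]; congr 2; group
    _ = ⇑h₂ '' Wseq Y₀ f (i - 1) := by rw [himg]
  · right; exact Set.not_nonempty_iff_eq_empty.mp hne

end Setting

end Stmt15
namespace Stmt15

open Set

variable {Z : Type*}

/-- Normal form for the action of elements of `R₁` on `W₀`. -/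
inductive GoodP (H₁ : Subgroup (Equiv.Perm Z)) (f : Equiv.Perm Z) (Y₀ W₀ : Set Z) :
    ℤ → Equiv.Perm Z → Prop
  | zero (r : Equiv.Perm Z) (hr : ∀ w ∈ W₀, r w = w) : GoodP H₁ f Y₀ W₀ 0 r
  | node (i k : ℤ) (hi : 1 ≤ i) (hk : 0 ≤ k) (hki : k < i) (r₀ g r : Equiv.Perm Z)
      (hg : g ∈ H₁) (hdisj : (⇑g '' Y₀) ∩ Y₀ = ∅) (hr₀ : GoodP H₁ f Y₀ W₀ k r₀)
      (heq : ∀ w ∈ W₀, r w = (f ^ (i - 1)) (g ((f ^ (1 - i)) (r₀ w)))) :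
      GoodP H₁ f Y₀ W₀ i r

variable {H₁ : Subgroup (Equiv.Perm Z)} {f : Equiv.Perm Z} {Y₀ W₀ : Set Z}

lemma GoodP.nonneg {k : ℤ} {r : Equiv.Perm Z} (h : GoodP H₁ f Y₀ W₀ k r) : 0 ≤ k := by
  induction h with
  | zero r hr => exact le_refl 0
  | node i k hi hk hki r₀ g r hg hdisj hr₀ heq ih => omega

lemma GoodP.zero_out {k : ℤ} {r : Equiv.Perm Z} (h : GoodP H₁ f Y₀ W₀ k r) (hk0 : k = 0) :
    ∀ w ∈ W₀, r w = w := by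
  induction h with
  | zero r hr => exact hr
  | node i k hi hk hki r₀ g r hg hdisj hr₀ heq ih => omega

lemma GoodP.node_out {k : ℤ} {r : Equiv.Perm Z} (h : GoodP H₁ f Y₀ W₀ k r) (hk1 : 1 ≤ k) :
    ∃ k₀ r₀ g, 0 ≤ k₀ ∧ k₀ < k ∧ g ∈ H₁ ∧ ((⇑g '' Y₀) ∩ Y₀ = ∅) ∧
      GoodP H₁ f Y₀ W₀ k₀ r₀ ∧
      ∀ w ∈ W₀, r w = (f ^ (k - 1)) (g ((f ^ (1 - k)) (r₀ w))) := by
  induction h with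
  | zero r hr => omega
  | node i k hi hk hki r₀ g r hg hdisj hr₀ heq ih =>
      exact ⟨k, r₀, g, hk, hki, hg, hdisj, hr₀, heq⟩

lemma GoodP.congr {k : ℤ} {r r' : Equiv.Perm Z} (h : GoodP H₁ f Y₀ W₀ k r)
    (hagree : ∀ w ∈ W₀, r' w = r w) : GoodP H₁ f Y₀ W₀ k r' := by
  rcases le_or_gt 1 k with hk1 | hk1
  · obtain ⟨k₀, r₀, g, h1, h2, h3, h4, h5, h6⟩ := h.node_out hk1
    exact GoodP.node k k₀ hk1 h1 h2 r₀ g r' h3 h4 h5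
      (fun w hw => (hagree w hw).trans (h6 w hw))
  · have hk0 : k = 0 := by have := h.nonneg; omega
    subst hk0
    exact GoodP.zero r' (fun w hw => (hagree w hw).trans (h.zero_out rfl w hw))

section Setting

variable (hs : InductiveSetting H₁ f Y₀ W₀)
include hs

lemma GoodP.mem_Y {k : ℤ} {r : Equiv.Perm Z} (h : GoodP H₁ f Y₀ W₀ k r) :
    ∀ w ∈ W₀, r w ∈ Wseq Y₀ f k := by
  induction h with
  | zero r hr =>
      intro w hw
      rw [hr w hw, Wseq_zero]
      exact W0_sub_Y0 hs hw
  | node i k hi hk hki r₀ g r hg hdisj hr₀ heq ih =>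
      intro w hw
      rw [heq w hw]
      have h1 : r₀ w ∈ Wseq Y₀ f (i - 1) := Yz_mono hs (by omega) (ih w hw)
      have h2 := shift_mem' (1 - i) h1
      have h3 : (i - 1) + (1 - i) = 0 := by ring
      rw [h3, Wseq_zero] at h2
      have h4 : g ((f ^ (1 - i)) (r₀ w)) ∈ Wseq Y₀ f 1 :=
        mem_preserve (H1_fixingOutside hs hg) (Y0_sub_Y1 hs h2)
      have h5 := shift_mem' (i - 1) h4
      have h6 : (1 : ℤ) + (i - 1) = i := by ring
      rwa [h6] at h5

lemma GoodP.loc {i : ℤ} {r : Equiv.Perm Z} (h : GoodP H₁ f Y₀ W₀ i r) (hi : 1 ≤ i) :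
    ∀ w ∈ W₀, (f ^ (1 - i)) (r w) ∈ Supp H₁ ∧ (f ^ (1 - i)) (r w) ∉ Y₀ := by
  obtain ⟨k₀, r₀, g, h1, h2, hg, hdisj, hr₀, heq⟩ := h.node_out hi
  intro w hw
  have hy : (f ^ (1 - i)) (r₀ w) ∈ Y₀ := by
    have ha : r₀ w ∈ Wseq Y₀ f (i - 1) := Yz_mono hs (by omega) (hr₀.mem_Y hs w hw)
    have hb := shift_mem' (1 - i) ha
    have hc : (i - 1) + (1 - i) = 0 := by ring
    rwa [hc, Wseq_zero] at hb
  have hval : (f ^ (1 - i)) (r w) = g ((f ^ (1 - i)) (r₀ w)) := by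
    rw [heq w hw, zpow_cancel_apply (by ring)]
  rw [hval]
  constructor
  · exact H1_maps_Supp hs hg (Y0_sub_Supp hs hy)
  · intro hmem
    have hx : g ((f ^ (1 - i)) (r₀ w)) ∈ (⇑g '' Y₀) ∩ Y₀ :=
      ⟨Set.mem_image_of_mem _ hy, hmem⟩
    rw [hdisj] at hx
    exact hx

lemma GoodP.notmem_Yk1 {i : ℤ} {r : Equiv.Perm Z} (h : GoodP H₁ f Y₀ W₀ i r) (hi : 1 ≤ i) :
    ∀ w ∈ W₀, r w ∉ Wseq Y₀ f (i - 1) := by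
  intro w hw hmem
  have h2 := shift_mem' (1 - i) hmem
  have h3 : (i - 1) + (1 - i) = 0 := by ring
  rw [h3, Wseq_zero] at h2
  exact (h.loc hs hi w hw).2 h2

lemma GoodP_step {j : ℤ} (hj : 1 ≤ j) {x : Equiv.Perm Z} (hx : x ∈ Hseq H₁ f j)
    {k : ℤ} {r : Equiv.Perm Z} (hr : GoodP H₁ f Y₀ W₀ k r) :
    ∃ k', GoodP H₁ f Y₀ W₀ k' (x * r) := by
  obtain ⟨g', hg', rfl⟩ := mem_Hseq_iff.mp hx
  rcases lt_trichotomy k j with hkj | hkj | hkj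
  · -- k < j
    have hymem : ∀ w ∈ W₀, (f ^ (1 - j)) (r w) ∈ Y₀ := by
      intro w hw
      have h1 : r w ∈ Wseq Y₀ f (j - 1) := Yz_mono hs (by omega) (hr.mem_Y hs w hw)
      have h2 := shift_mem' (1 - j) h1
      have h3 : (j - 1) + (1 - j) = 0 := by ring
      rwa [h3, Wseq_zero] at h2
    by_cases hgY : (⇑g' '' Y₀ ∩ Y₀).Nonempty
    · refine ⟨k, hr.congr ?_⟩
      intro w hw
      have hfix := H1_fix_ptwise hs hg' hgY
      show (f ^ (j - 1) * g' * (f ^ (j - 1))⁻¹) (r w) = r w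
      rw [Hseq_apply, hfix _ (hymem w hw), zpow_cancel_apply (by ring)]
    · refine ⟨j, GoodP.node j k hj hr.nonneg hkj r g' _ hg'
        (Set.not_nonempty_iff_eq_empty.mp hgY) hr ?_⟩
      intro w hw
      show (f ^ (j - 1) * g' * (f ^ (j - 1))⁻¹) (r w) = _
      rw [Hseq_apply]
  · -- k = j : r is a node
    subst hkj
    obtain ⟨k₀, r₀, g, hk₀, hki, hg, hdisj, hr₀, heq⟩ := hr.node_out hj
    have hy₀ : ∀ w ∈ W₀, (f ^ (1 - k)) (r₀ w) ∈ Y₀ := by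
      intro w hw
      have h1 : r₀ w ∈ Wseq Y₀ f (k - 1) := Yz_mono hs (by omega) (hr₀.mem_Y hs w hw)
      have h2 := shift_mem' (1 - k) h1
      have h3 : (k - 1) + (1 - k) = 0 := by ring
      rwa [h3, Wseq_zero] at h2
    have hcomp : ∀ w ∈ W₀,
        (f ^ (k - 1) * g' * (f ^ (k - 1))⁻¹ * r) w
          = (f ^ (k - 1)) ((g' * g) ((f ^ (1 - k)) (r₀ w))) := by
      intro w hw
      show (f ^ (k - 1) * g' * (f ^ (k - 1))⁻¹) (r w) = _
      rw [Hseq_apply, heq w hw, zpow_cancel_apply (by ring)]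
      rfl
    by_cases hgY : (⇑(g' * g) '' Y₀ ∩ Y₀).Nonempty
    · refine ⟨k₀, hr₀.congr ?_⟩
      intro w hw
      rw [hcomp w hw, H1_fix_ptwise hs (mul_mem hg' hg) hgY _ (hy₀ w hw)]
      have hc : (f ^ (k - 1)) ((f ^ (1 - k)) (r₀ w)) = r₀ w :=
        zpow_cancel_apply (by ring) _
      exact hc
    · exact ⟨k, GoodP.node k k₀ hj hk₀ hki r₀ (g' * g) _ (mul_mem hg' hg)
        (Set.not_nonempty_iff_eq_empty.mp hgY) hr₀ hcomp⟩
  · -- j < k : x fixes r w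
    have hk1 : 1 ≤ k := by omega
    refine ⟨k, hr.congr ?_⟩
    intro w hw
    show (f ^ (j - 1) * g' * (f ^ (j - 1))⁻¹) (r w) = r w
    have hout : r w ∉ Wseq Y₀ f j := by
      intro hmem
      exact hr.notmem_Yk1 hs hk1 w hw (Yz_mono hs (by omega) hmem)
    exact Hseq_le_fixingOutside hs j (mem_Hseq_intro hg') _ hout

lemma R1_GoodP : ∀ r ∈ Rseq H₁ f 1, ∃ k, GoodP H₁ f Y₀ W₀ k r := by
  intro r hr
  rw [Rseq] at hr
  have key : ∀ x ∈ (⋃ i ∈ {i : ℤ | 1 ≤ i}, (Hseq H₁ f i : Set (Equiv.Perm Z))),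
      ∀ y : Equiv.Perm Z, (∃ k, GoodP H₁ f Y₀ W₀ k y) → ∃ k, GoodP H₁ f Y₀ W₀ k (x * y) := by
    intro x hx y hy
    simp only [Set.mem_iUnion, Set.mem_setOf_eq, SetLike.mem_coe] at hx
    obtain ⟨j, hj, hxj⟩ := hx
    obtain ⟨k, hk⟩ := hy
    exact GoodP_step hs hj hxj hk
  induction hr using Subgroup.closure_induction_left with
  | one => exact ⟨0, GoodP.zero 1 (fun w _ => rfl)⟩
  | mul_left x hx y hy ih => exact key x hx y ih
  | inv_mul_cancel x hx y hy ih =>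
      refine key x⁻¹ ?_ y ih
      simp only [Set.mem_iUnion, Set.mem_setOf_eq, SetLike.mem_coe] at hx ⊢
      obtain ⟨j, hj, hxj⟩ := hx
      exact ⟨j, hj, inv_mem hxj⟩

lemma R1_cases {r : Equiv.Perm Z} (hr : r ∈ Rseq H₁ f 1) :
    (∀ w ∈ W₀, r w = w) ∨
      ∃ i : ℤ, 1 ≤ i ∧ ∀ w ∈ W₀,
        ((f ^ (1 - i)) (r w) ∈ Supp H₁ ∧ (f ^ (1 - i)) (r w) ∉ Y₀) := by
  obtain ⟨k, hk⟩ := R1_GoodP hs r hr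
  by_cases hk0 : k = 0
  · exact Or.inl (hk.zero_out hk0)
  · right
    have h1 : 1 ≤ k := by have := hk.nonneg; omega
    exact ⟨k, h1, hk.loc hs h1⟩

end Setting

end Stmt15
namespace Stmt15

open Set

variable {Z : Type*} {H₁ : Subgroup (Equiv.Perm Z)} {f : Equiv.Perm Z} {Y₀ W₀ : Set Z}

lemma fpow_mem_V (n : ℤ) : f ^ n ∈ H₁ ⊔ Subgroup.zpowers f :=
  le_sup_right (α := Subgroup (Equiv.Perm Z)) (Subgroup.zpow_mem _ (Subgroup.mem_zpowers f) n)

lemma H1_le_V : H₁ ≤ H₁ ⊔ Subgroup.zpowers f := le_sup_left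

lemma Hseq_le_V (i : ℤ) : Hseq H₁ f i ≤ H₁ ⊔ Subgroup.zpowers f := by
  intro h hh
  obtain ⟨g, hg, rfl⟩ := mem_Hseq_iff.mp hh
  exact mul_mem (mul_mem (fpow_mem_V _) (H1_le_V hg)) (inv_mem (fpow_mem_V _))

lemma R1_le_V : Rseq H₁ f 1 ≤ H₁ ⊔ Subgroup.zpowers f := by
  rw [Rseq]
  rw [Subgroup.closure_le]
  rintro x hx
  simp only [Set.mem_iUnion, Set.mem_setOf_eq, SetLike.mem_coe] at hx
  obtain ⟨j, hj, hxj⟩ := hx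
  exact Hseq_le_V j hxj

lemma mem_Mgrp_of_Hseq {i : ℤ} {x : Equiv.Perm Z} (hx : x ∈ Hseq H₁ f i) :
    x ∈ Mgrp H₁ f := by
  apply Subgroup.subset_closure
  exact Set.mem_iUnion.mpr ⟨i, hx⟩

lemma V_eq_f_M : ∀ v ∈ H₁ ⊔ Subgroup.zpowers f, ∃ n : ℤ, ∃ m ∈ Mgrp H₁ f, v = f ^ n * m := by
  have hVc : H₁ ⊔ Subgroup.zpowers f
      = Subgroup.closure ((H₁ : Set (Equiv.Perm Z)) ∪ (Subgroup.zpowers f : Set (Equiv.Perm Z))) := by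
    rw [Subgroup.closure_union, Subgroup.closure_eq, Subgroup.closure_eq]
  intro v hv
  rw [hVc] at hv
  have key : ∀ x ∈ ((H₁ : Set (Equiv.Perm Z)) ∪ (Subgroup.zpowers f : Set (Equiv.Perm Z))),
      ∀ y : Equiv.Perm Z, (∃ n : ℤ, ∃ m ∈ Mgrp H₁ f, y = f ^ n * m) →
        ∃ n : ℤ, ∃ m ∈ Mgrp H₁ f, x * y = f ^ n * m := by
    rintro x hx y ⟨n, m, hm, rfl⟩
    rcases hx with hx | hx
    · refine ⟨n, (f ^ (-n) * x * f ^ n) * m, mul_mem ?_ hm, by group⟩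
      apply mem_Mgrp_of_Hseq (i := 1 - n)
      apply mem_Hseq_iff.mpr
      refine ⟨x, hx, ?_⟩
      have h1 : (1 : ℤ) - n - 1 = -n := by ring
      rw [h1, ← zpow_neg]
      congr 2
      ring
    · obtain ⟨t, rfl⟩ := Subgroup.mem_zpowers_iff.mp hx
      exact ⟨t + n, m, hm, by rw [zpow_add]; group⟩
  induction hv using Subgroup.closure_induction_left with
  | one => exact ⟨0, 1, one_mem _, by group⟩
  | mul_left x hx y hy ih => exact key x hx y ih
  | inv_mul_cancel x hx y hy ih =>
      refine key x⁻¹ ?_ y ih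
      rcases hx with hx | hx
      · exact Or.inl (inv_mem hx)
      · exact Or.inr (inv_mem hx)

section Setting

variable (hs : InductiveSetting H₁ f Y₀ W₀)
include hs

lemma M_to_R : ∀ m ∈ Mgrp H₁ f, ∃ r ∈ Rseq H₁ f 1, ∀ w ∈ W₀, m w = r w := by
  intro m hm
  rw [Mgrp] at hm
  have key : ∀ x ∈ (⋃ i : ℤ, (Hseq H₁ f i : Set (Equiv.Perm Z))),
      ∀ y : Equiv.Perm Z, (∃ r ∈ Rseq H₁ f 1, ∀ w ∈ W₀, y w = r w) →
        ∃ r ∈ Rseq H₁ f 1, ∀ w ∈ W₀, (x * y) w = r w := by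
    rintro x hx y ⟨r, hr, hyr⟩
    simp only [Set.mem_iUnion, SetLike.mem_coe] at hx
    obtain ⟨j, hxj⟩ := hx
    by_cases hj : 1 ≤ j
    · refine ⟨x * r, mul_mem ?_ hr, ?_⟩
      · apply Subgroup.subset_closure
        exact Set.mem_biUnion hj hxj
      · intro w hw
        show x (y w) = x (r w)
        rw [hyr w hw]
    · refine ⟨r, hr, ?_⟩
      intro w hw
      show x (y w) = r w
      rw [hyr w hw]
      -- x fixes r w
      rcases R1_cases hs hr with hfix | ⟨i, hi, hloc⟩
      · -- r w = w ∈ W₀ ; x fixes W₀ pointwise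
        rw [hfix w hw]
        obtain ⟨g, hg, rfl⟩ := mem_Hseq_iff.mp hxj
        rw [Hseq_apply]
        have hWmem : (f ^ (1 - j)) w ∈ Wseq W₀ f (1 - j) := by
          have := shift_mem' (f := f) (X := W₀) (a := 0) (1 - j) (by rw [Wseq_zero]; exact hw)
          rwa [zero_add] at this
        have hgfix : g ((f ^ (1 - j)) w) = (f ^ (1 - j)) w := by
          by_contra hne
          have hsupp : (f ^ (1 - j)) w ∈ Supp H₁ := ⟨g, hg, hne⟩
          have : (f ^ (1 - j)) w ∈ Wseq W₀ f (1 - j) ∩ Supp H₁ := ⟨hWmem, hsupp⟩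
          rw [Wk_disj_Supp hs (by omega)] at this
          exact this
        rw [hgfix, zpow_cancel_apply (by ring)]
      · -- r w is outside Y_j
        have hout : r w ∉ Wseq Y₀ f j := by
          intro hmem
          have h2 := shift_mem' (1 - i) (Yz_mono hs (by omega : j ≤ i - 1) hmem)
          have h3 : (i - 1) + (1 - i) = 0 := by ring
          rw [h3, Wseq_zero] at h2
          exact (hloc w hw).2 h2
        exact Hseq_le_fixingOutside hs j hxj _ hout
  induction hm using Subgroup.closure_induction_left with
  | one => exact ⟨1, one_mem _, fun w _ => rfl⟩
  | mul_left x hx y hy ih => exact key x hx y ih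
  | inv_mul_cancel x hx y hy ih =>
      refine key x⁻¹ ?_ y ih
      simp only [Set.mem_iUnion, SetLike.mem_coe] at hx ⊢
      obtain ⟨j, hxj⟩ := hx
      exact ⟨j, inv_mem hxj⟩

lemma V_normal_form : ∀ v ∈ H₁ ⊔ Subgroup.zpowers f,
    ∃ n : ℤ, ∃ r ∈ Rseq H₁ f 1, ∀ w ∈ W₀, v w = (f ^ n) (r w) := by
  intro v hv
  obtain ⟨n, m, hm, rfl⟩ := V_eq_f_M v hv
  obtain ⟨r, hr, hagree⟩ := M_to_R hs m hm
  refine ⟨n, r, hr, ?_⟩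
  intro w hw
  show (f ^ n) (m w) = (f ^ n) (r w)
  rw [hagree w hw]

lemma carrier_eq : wreathCarrier (H₁ ⊔ Subgroup.zpowers f) W₀
    = {A : Set Z | ∃ n : ℤ, ∃ r ∈ Rseq H₁ f 1, A = ⇑(f ^ n) '' (⇑r '' W₀)} := by
  ext A
  constructor
  · rintro ⟨v, hv, rfl⟩
    obtain ⟨n, r, hr, hagree⟩ := V_normal_form hs v hv
    refine ⟨n, r, hr, ?_⟩
    rw [Set.image_image]
    exact Set.image_congr hagree
  · rintro ⟨n, r, hr, rfl⟩
    refine ⟨f ^ n * r, mul_mem (fpow_mem_V n) (R1_le_V hr), ?_⟩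
    rw [mul_img]

lemma carrier_loc {A : Set Z} (hA : A ∈ wreathCarrier (H₁ ⊔ Subgroup.zpowers f) W₀) :
    ∃ p : ℤ, A ⊆ Wseq Y₀ f p ∧ A ∩ Wseq Y₀ f (p - 1) = ∅ := by
  rw [carrier_eq hs] at hA
  obtain ⟨n, r, hr, rfl⟩ := hA
  rcases R1_cases hs hr with hfix | ⟨i, hi, hloc⟩
  · refine ⟨n, ?_, ?_⟩
    · rw [fix_img hfix]
      exact Wseq_mono (W0_sub_Y0 hs) n
    · rw [fix_img hfix]
      exact Wk_disj_Yk1 hs n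
  · refine ⟨n + i, ?_, ?_⟩
    · rintro _ ⟨_, ⟨w, hw, rfl⟩, rfl⟩
      have h1 : (f ^ (1 - i)) (r w) ∈ Supp H₁ := (hloc w hw).1
      have h2 : (f ^ (1 - i)) (r w) ∈ Wseq Y₀ f 1 := Supp_sub_Y1 hs h1
      have h3 := shift_mem' (i - 1) h2
      have h4 : (1 : ℤ) + (i - 1) = i := by ring
      rw [h4] at h3
      rw [zpow_cancel_apply (by ring : (i - 1) + (1 - i) = 0)] at h3
      have h5 := shift_mem' n h3
      have h6 : i + n = n + i := by ring
      rwa [h6] at h5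
    · rw [Set.eq_empty_iff_forall_notMem]
      rintro z ⟨⟨_, ⟨w, hw, rfl⟩, rfl⟩, hz2⟩
      have h1 := shift_mem hz2
      have h2 : (n + i - 1) - n = i - 1 := by ring
      rw [h2] at h1
      have h3 := shift_mem' (1 - i) h1
      have h4 : (i - 1) + (1 - i) = 0 := by ring
      rw [h4, Wseq_zero] at h3
      exact (hloc w hw).2 h3

lemma carrier_dichotomy {A : Set Z} (hA : A ∈ wreathCarrier (H₁ ⊔ Subgroup.zpowers f) W₀)
    (k : ℤ) : A ⊆ Wseq Y₀ f k ∨ A ∩ Wseq Y₀ f k = ∅ := by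
  obtain ⟨p, h1, h2⟩ := carrier_loc hs hA
  rcases le_or_gt p k with h | h
  · exact Or.inl (h1.trans (Yz_mono hs h))
  · right
    rw [Set.eq_empty_iff_forall_notMem]
    rintro z ⟨hz1, hz2⟩
    have : z ∈ A ∩ Wseq Y₀ f (p - 1) := ⟨hz1, Yz_mono hs (by omega) hz2⟩
    rw [h2] at this
    exact this

lemma carrier_nonempty {A : Set Z} (hA : A ∈ wreathCarrier (H₁ ⊔ Subgroup.zpowers f) W₀) :
    A.Nonempty := by
  obtain ⟨v, hv, rfl⟩ := hA
  exact (W0_nonempty hs).image _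

lemma condition_ii : ∀ v ∈ H₁ ⊔ Subgroup.zpowers f,
    (⇑v '' W₀ ∩ W₀).Nonempty → ∀ x ∈ W₀, v x = x := by
  intro v hv hne
  obtain ⟨n, r, hr, hagree⟩ := V_normal_form hs v hv
  rcases R1_cases hs hr with hfix | ⟨i, hi, hloc⟩
  · -- v '' W₀ = W_n
    have himg : ⇑v '' W₀ = Wseq W₀ f n := by
      have h1 : ⇑v '' W₀ = ⇑(f ^ n) '' (⇑r '' W₀) := by
        rw [Set.image_image]
        exact Set.image_congr hagree
      rw [h1, fix_img hfix, Wseq]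
    have hn0 : n = 0 := by
      by_contra hn
      rw [himg] at hne
      have h0 : Wseq W₀ f n ∩ W₀ = ∅ := by
        have := Wab_disj hs (a := n) (b := 0) hn
        rwa [Wseq_zero] at this
      rw [h0] at hne
      exact Set.not_nonempty_empty hne
    subst hn0
    intro x hx
    rw [hagree x hx, hfix x hx]
    simp
  · -- impossible
    exfalso
    obtain ⟨z, hz1, hz2⟩ := hne
    obtain ⟨w, hw, rfl⟩ := hz1
    rw [hagree w hw] at hz2
    have hq := hloc w hw
    set q := (f ^ (1 - i)) (r w) with hqdef
    have hq2 : (f ^ (1 - i - n)) ((f ^ n) (r w)) = q := by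
      rw [zz]
      have h : (1 - i - n) + n = 1 - i := by ring
      rw [h]
    have hq3 : q ∈ Wseq W₀ f (1 - i - n) := by
      rw [← hq2]
      have := shift_mem' (f := f) (X := W₀) (a := 0) (1 - i - n) (by rw [Wseq_zero]; exact hz2)
      rwa [zero_add] at this
    rcases le_or_gt (1 : ℤ) (1 - i - n) with hcase | hcase
    · have : q ∈ Wseq W₀ f (1 - i - n) ∩ Supp H₁ := ⟨hq3, hq.1⟩
      rw [Wk_disj_Supp hs hcase] at this
      exact this
    · have : q ∈ Y₀ := by
        have h2 : q ∈ Wseq Y₀ f (1 - i - n) := Wseq_mono (W0_sub_Y0 hs) _ hq3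
        have h3 := Yz_mono hs (by omega : 1 - i - n ≤ 0) h2
        rwa [Wseq_zero] at h3
      exact hq.2 this

lemma condition_i : (H₁ ⊔ Subgroup.zpowers f) ≤ fixingOutside (⇑f '' Y₀ ∪ {z : Z | f z ≠ z}) := by
  apply sup_le
  · intro g hg z hz
    apply hs.1.2.1 g hg
    intro hmem
    exact hz (Or.inl hmem)
  · rw [Subgroup.zpowers_le]
    intro z hz
    by_contra hne
    exact hz (Or.inr hne)

end Setting

end Stmt15
namespace Stmt15

open Set

variable {Z : Type*} {H₁ : Subgroup (Equiv.Perm Z)} {f : Equiv.Perm Z} {Y₀ W₀ : Set Z}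

/-- The subgroup generated by the `H_j` with `a ≤ j ≤ b`. -/
def Kab (H₁ : Subgroup (Equiv.Perm Z)) (f : Equiv.Perm Z) (a b : ℤ) : Subgroup (Equiv.Perm Z) :=
  Subgroup.closure (⋃ j ∈ Set.Icc a b, (Hseq H₁ f j : Set (Equiv.Perm Z)))

lemma Kab_mono {a a' b b' : ℤ} (ha : a' ≤ a) (hb : b ≤ b') : Kab H₁ f a b ≤ Kab H₁ f a' b' :=
  Subgroup.closure_mono (Set.biUnion_subset_biUnion_left (Set.Icc_subset_Icc ha hb))

lemma Kab_bot {a b : ℤ} (h : b < a) : Kab H₁ f a b = ⊥ := by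
  rw [Kab]
  have he : Set.Icc a b = ∅ := Set.Icc_eq_empty (by omega)
  rw [he]
  simp

lemma mem_window : ∀ m ∈ Mgrp H₁ f, ∃ a b : ℤ, a ≤ b ∧ m ∈ Kab H₁ f a b := by
  intro m hm
  rw [Mgrp] at hm
  induction hm using Subgroup.closure_induction with
  | mem x hx =>
      simp only [Set.mem_iUnion, SetLike.mem_coe] at hx
      obtain ⟨j, hxj⟩ := hx
      exact ⟨j, j, le_refl j,
        Subgroup.subset_closure (Set.mem_biUnion (Set.mem_Icc.mpr ⟨le_refl j, le_refl j⟩) hxj)⟩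
  | one => exact ⟨0, 0, le_refl 0, one_mem _⟩
  | mul x y hx hy ihx ihy =>
      obtain ⟨a1, b1, h1, hk1⟩ := ihx
      obtain ⟨a2, b2, h2, hk2⟩ := ihy
      exact ⟨min a1 a2, max b1 b2, by omega,
        mul_mem (Kab_mono (by omega) (by omega) hk1) (Kab_mono (by omega) (by omega) hk2)⟩
  | inv x hx ihx =>
      obtain ⟨a1, b1, h1, hk1⟩ := ihx
      exact ⟨a1, b1, h1, inv_mem hk1⟩

section Setting

variable (hs : InductiveSetting H₁ f Y₀ W₀)
include hs

lemma Kab_le_fixingOutside (a b : ℤ) : Kab H₁ f a b ≤ fixingOutside (Wseq Y₀ f b) := by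
  rw [Kab, Subgroup.closure_le]
  rintro x hx
  simp only [Set.mem_iUnion, SetLike.mem_coe] at hx
  obtain ⟨j, hj, hxj⟩ := hx
  exact fixingOutside_mono (Yz_mono hs (Set.mem_Icc.mp hj).2) (Hseq_le_fixingOutside hs j hxj)

lemma window_NF {a b : ℤ} : ∀ m ∈ Kab H₁ f a b,
    ∃ μ ∈ Hseq H₁ f b,
      (∀ z : Z, (∀ c ∈ Hseq H₁ f b, z ∉ ⇑c '' Wseq Y₀ f (b - 1)) → m z = μ z) ∧
      (∀ c ∈ Hseq H₁ f b, ∃ m' ∈ Kab H₁ f a (b - 1),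
        ∀ z ∈ ⇑c '' Wseq Y₀ f (b - 1), m z = μ (c (m' (c⁻¹ z)))) := by
  intro m hm
  rw [Kab] at hm
  have key : ∀ x ∈ (⋃ j ∈ Set.Icc a b, (Hseq H₁ f j : Set (Equiv.Perm Z))),
      ∀ y : Equiv.Perm Z,
      (∃ μ ∈ Hseq H₁ f b,
        (∀ z : Z, (∀ c ∈ Hseq H₁ f b, z ∉ ⇑c '' Wseq Y₀ f (b - 1)) → y z = μ z) ∧
        (∀ c ∈ Hseq H₁ f b, ∃ m' ∈ Kab H₁ f a (b - 1),
          ∀ z ∈ ⇑c '' Wseq Y₀ f (b - 1), y z = μ (c (m' (c⁻¹ z))))) →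
      (∃ μ ∈ Hseq H₁ f b,
        (∀ z : Z, (∀ c ∈ Hseq H₁ f b, z ∉ ⇑c '' Wseq Y₀ f (b - 1)) → (x * y) z = μ z) ∧
        (∀ c ∈ Hseq H₁ f b, ∃ m' ∈ Kab H₁ f a (b - 1),
          ∀ z ∈ ⇑c '' Wseq Y₀ f (b - 1), (x * y) z = μ (c (m' (c⁻¹ z))))) := by
    rintro x hx y ⟨μ, hμ, hout, hin⟩
    simp only [Set.mem_iUnion, SetLike.mem_coe] at hx
    obtain ⟨j, hjIcc, hxj⟩ := hx
    obtain ⟨hja, hjb⟩ := Set.mem_Icc.mp hjIcc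
    rcases eq_or_lt_of_le hjb with hjb' | hjb'
    · -- j = b : absorb x into μ
      subst hjb'
      refine ⟨x * μ, mul_mem hxj hμ, ?_, ?_⟩
      · intro z hz
        show x (y z) = x (μ z)
        rw [hout z hz]
      · intro c hc
        obtain ⟨m', hm', hm'eq⟩ := hin c hc
        refine ⟨m', hm', ?_⟩
        intro z hz
        show x (y z) = x (μ (c (m' (c⁻¹ z))))
        rw [hm'eq z hz]
    · -- j < b
      have hxK : x ∈ Kab H₁ f a (b - 1) :=
        Subgroup.subset_closure (Set.mem_biUnion (Set.mem_Icc.mpr ⟨hja, by omega⟩) hxj)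
      refine ⟨μ, hμ, ?_, ?_⟩
      · intro z hz
        show x (y z) = μ z
        rw [hout z hz]
        apply Hseq_le_fixingOutside hs j hxj
        intro hμzj
        have hμzY : μ z ∈ Wseq Y₀ f (b - 1) := Yz_mono hs (by omega) hμzj
        apply hz μ⁻¹ (inv_mem hμ)
        exact ⟨μ z, hμzY, Equiv.symm_apply_apply μ z⟩
      · intro c hc
        obtain ⟨m', hm', hm'eq⟩ := hin c hc
        by_cases hd : ((⇑(μ * c) '' Wseq Y₀ f (b - 1)) ∩ Wseq Y₀ f (b - 1)).Nonempty
        · -- μ * c fixes Y pointwise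
          have hfixd := Hseq_fix_ptwise hs (i := b) (mul_mem hμ hc) hd
          refine ⟨x * m', mul_mem hxK hm', ?_⟩
          rintro z ⟨q0, hq0, rfl⟩
          have hq0' : c⁻¹ (c q0) = q0 := Equiv.symm_apply_apply c q0
          show x (y (c q0)) = μ (c ((x * m') (c⁻¹ (c q0))))
          rw [hm'eq (c q0) ⟨q0, hq0, rfl⟩, hq0']
          show x (μ (c (m' q0))) = μ (c (x (m' q0)))
          set q := m' q0 with hqdef
          have hqY : q ∈ Wseq Y₀ f (b - 1) :=
            mem_preserve (Kab_le_fixingOutside hs a (b - 1) hm') hq0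
          have hxqY : x q ∈ Wseq Y₀ f (b - 1) := by
            by_cases hqj : q ∈ Wseq Y₀ f j
            · exact Yz_mono hs (by omega)
                (mem_preserve (Hseq_le_fixingOutside hs j hxj) hqj)
            · rw [Hseq_le_fixingOutside hs j hxj _ hqj]
              exact hqY
          have h1 : μ (c q) = q := hfixd _ hqY
          have h2 : μ (c (x q)) = x q := hfixd _ hxqY
          rw [h1, h2]
        · have hdE := Set.not_nonempty_iff_eq_empty.mp hd
          refine ⟨m', hm', ?_⟩
          rintro z ⟨q0, hq0, rfl⟩
          show x (y (c q0)) = μ (c (m' (c⁻¹ (c q0))))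
          rw [hm'eq (c q0) ⟨q0, hq0, rfl⟩]
          apply Hseq_le_fixingOutside hs j hxj
          intro hwj
          have hqY : m' (c⁻¹ (c q0)) ∈ Wseq Y₀ f (b - 1) := by
            rw [(show ∀ (e : Equiv.Perm Z) (x : Z), e⁻¹ (e x) = x from fun e x => e.symm_apply_apply x)]
            exact mem_preserve (Kab_le_fixingOutside hs a (b - 1) hm') hq0
          have hwd : μ (c (m' (c⁻¹ (c q0)))) ∈ ⇑(μ * c) '' Wseq Y₀ f (b - 1) :=
            ⟨m' (c⁻¹ (c q0)), hqY, rfl⟩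
          have hcontr : μ (c (m' (c⁻¹ (c q0)))) ∈
              (⇑(μ * c) '' Wseq Y₀ f (b - 1)) ∩ Wseq Y₀ f (b - 1) :=
            ⟨hwd, Yz_mono hs (by omega) hwj⟩
          rw [hdE] at hcontr
          exact hcontr
  induction hm using Subgroup.closure_induction_left with
  | one =>
      refine ⟨1, one_mem _, fun z _ => rfl, fun c hc => ⟨1, one_mem _, ?_⟩⟩
      intro z hz
      simp
  | mul_left x hx y hy ih => exact key x hx y ih
  | inv_mul_cancel x hx y hy ih =>
      refine key x⁻¹ ?_ y ih
      simp only [Set.mem_iUnion, SetLike.mem_coe] at hx ⊢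
      obtain ⟨j, hj, hxj⟩ := hx
      exact ⟨j, hj, inv_mem hxj⟩

lemma window_mu_ne {a b : ℤ} {m μ : Equiv.Perm Z} (hμ : μ ∈ Hseq H₁ f b) (hμ1 : μ ≠ 1)
    (hin : ∀ c ∈ Hseq H₁ f b, ∃ m' ∈ Kab H₁ f a (b - 1),
        ∀ z ∈ ⇑c '' Wseq Y₀ f (b - 1), m z = μ (c (m' (c⁻¹ z)))) :
    ∃ u ∈ H₁ ⊔ Subgroup.zpowers f, ⇑m '' (⇑u '' W₀) ≠ ⇑u '' W₀ := by
  obtain ⟨g, hg, hμeq⟩ := mem_Hseq_iff.mp hμ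
  have hg1 : g ≠ 1 := by
    rintro rfl
    apply hμ1
    rw [hμeq]
    group
  obtain ⟨j₀, hj₀, hneq⟩ := H1_iii hs hg hg1
  have hdisj : (⇑(g * j₀) '' Y₀) ∩ (⇑j₀ '' Y₀) = ∅ := by
    rcases H1_trans_eq_or_disj hs (mul_mem hg hj₀) hj₀ with he | hd
    · exfalso; apply hneq; rw [← mul_img]; exact he
    · exact hd
  set c : Equiv.Perm Z := f ^ (b - 1) * j₀ * (f ^ (b - 1))⁻¹ with hcdef
  have hc : c ∈ Hseq H₁ f b := mem_Hseq_intro hj₀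
  obtain ⟨m', hm', hm'eq⟩ := hin c hc
  refine ⟨c * f ^ (b - 1), mul_mem (Hseq_le_V b hc) (fpow_mem_V _), ?_⟩
  have hYdef : Wseq Y₀ f (b - 1) = ⇑(f ^ (b - 1)) '' Y₀ := rfl
  have hT : ⇑(c * f ^ (b - 1)) '' W₀ = ⇑c '' (⇑(f ^ (b - 1)) '' W₀) := mul_img _ _ _
  have hTY : ⇑(f ^ (b - 1)) '' W₀ ⊆ Wseq Y₀ f (b - 1) := by
    rw [hYdef]; exact Set.image_mono (W0_sub_Y0 hs)
  have hcY : ⇑c '' Wseq Y₀ f (b - 1) = ⇑(f ^ (b - 1)) '' (⇑j₀ '' Y₀) := Hseq_img_Y j₀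
  have hmT : ∀ t ∈ ⇑(c * f ^ (b - 1)) '' W₀,
      m t ∈ ⇑(f ^ (b - 1)) '' (⇑(g * j₀) '' Y₀) := by
    intro t ht
    rw [hT] at ht
    obtain ⟨s, hsW, rfl⟩ := ht
    have hsY : s ∈ Wseq Y₀ f (b - 1) := hTY hsW
    have h1 : m (c s) = μ (c (m' (c⁻¹ (c s)))) := hm'eq _ ⟨s, hsY, rfl⟩
    rw [(show ∀ (e : Equiv.Perm Z) (x : Z), e⁻¹ (e x) = x from fun e x => e.symm_apply_apply x)] at h1
    have hq : m' s ∈ Wseq Y₀ f (b - 1) :=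
      mem_preserve (Kab_le_fixingOutside hs a (b - 1) hm') hsY
    have h2 : c (m' s) ∈ ⇑c '' Wseq Y₀ f (b - 1) := Set.mem_image_of_mem _ hq
    rw [hcY] at h2
    obtain ⟨y, hy, hyeq⟩ := h2
    have h3 : μ (c (m' s)) = (f ^ (b - 1)) (g y) := by
      rw [← hyeq, hμeq, Hseq_apply, zpow_cancel_apply (by ring)]
    rw [h1, h3]
    refine Set.mem_image_of_mem _ ?_
    rw [mul_img]
    exact Set.mem_image_of_mem _ hy
  intro hEq
  obtain ⟨t₀, ht₀⟩ : (⇑(c * f ^ (b - 1)) '' W₀).Nonempty := (W0_nonempty hs).image _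
  have ht₀' := ht₀
  rw [← hEq] at ht₀'
  obtain ⟨t₁, ht₁, rfl⟩ := ht₀'
  have h4 : m t₁ ∈ ⇑(f ^ (b - 1)) '' (⇑(g * j₀) '' Y₀) := hmT t₁ ht₁
  have h5 : m t₁ ∈ ⇑(f ^ (b - 1)) '' (⇑j₀ '' Y₀) := by
    rw [← hcY]
    have : ⇑(c * f ^ (b - 1)) '' W₀ ⊆ ⇑c '' Wseq Y₀ f (b - 1) := by
      rw [hT]
      exact Set.image_mono hTY
    exact this ht₀
  have h6 : m t₁ ∈ (⇑(f ^ (b - 1)) '' (⇑(g * j₀) '' Y₀)) ∩ (⇑(f ^ (b - 1)) '' (⇑j₀ '' Y₀)) :=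
    ⟨h4, h5⟩
  rw [perm_img_disj _ hdisj] at h6
  exact h6

lemma window_step {a b : ℤ} (hab : a ≤ b)
    (IH : ∀ m' ∈ Kab H₁ f a (b - 1), m' ≠ 1 →
      ∃ u ∈ H₁ ⊔ Subgroup.zpowers f, ⇑m' '' (⇑u '' W₀) ≠ ⇑u '' W₀) :
    ∀ m ∈ Kab H₁ f a b, m ≠ 1 →
      ∃ u ∈ H₁ ⊔ Subgroup.zpowers f, ⇑m '' (⇑u '' W₀) ≠ ⇑u '' W₀ := by
  intro m hm hm1
  obtain ⟨μ, hμ, hout, hin⟩ := window_NF hs m hm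
  by_cases hμ1 : μ = 1
  · subst hμ1
    obtain ⟨z₀, hz₀⟩ := perm_ne_one_iff.mp hm1
    have hz₀mem : ¬ (∀ c ∈ Hseq H₁ f b, z₀ ∉ ⇑c '' Wseq Y₀ f (b - 1)) := by
      intro hcon
      apply hz₀
      rw [hout z₀ hcon]
      rfl
    push_neg at hz₀mem
    obtain ⟨c, hc, hz₀c⟩ := hz₀mem
    obtain ⟨m', hm', hm'eq⟩ := hin c hc
    have hkey : ∀ z ∈ ⇑c '' Wseq Y₀ f (b - 1), m z = c (m' (c⁻¹ z)) := by
      intro z hz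
      rw [hm'eq z hz]
      rfl
    have hm'1 : m' ≠ 1 := by
      rintro rfl
      apply hz₀
      rw [hkey z₀ hz₀c]
      simp
    obtain ⟨u, hu, hmoved⟩ := IH m' hm' hm'1
    have hsub : ⇑u '' W₀ ⊆ Wseq Y₀ f (b - 1) := by
      rcases carrier_dichotomy hs ⟨u, hu, rfl⟩ (b - 1) with hsub | hdisj2
      · exact hsub
      · exfalso
        apply hmoved
        apply fix_img
        intro t ht
        apply Kab_le_fixingOutside hs a (b - 1) hm'
        intro htY
        have hx : t ∈ (⇑u '' W₀) ∩ Wseq Y₀ f (b - 1) := ⟨ht, htY⟩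
        rw [hdisj2] at hx
        exact hx
    refine ⟨c * u, mul_mem (Hseq_le_V b hc) hu, ?_⟩
    set S : Set Z := ⇑u '' W₀ with hSdef
    have hT : ⇑(c * u) '' W₀ = ⇑c '' S := mul_img _ _ _
    rw [hT]
    have himg : ⇑m '' (⇑c '' S) = ⇑c '' (⇑m' '' S) := by
      rw [Set.image_image (⇑m) (⇑c), Set.image_image (⇑c) (⇑m')]
      apply Set.image_congr
      intro s hsmem
      have hsY : s ∈ Wseq Y₀ f (b - 1) := hsub hsmem
      rw [hkey (c s) (Set.mem_image_of_mem _ hsY)]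
      rw [(show ∀ (e : Equiv.Perm Z) (x : Z), e⁻¹ (e x) = x from fun e x => e.symm_apply_apply x)]
    rw [himg]
    exact perm_img_ne c hmoved
  · exact window_mu_ne hs hμ hμ1 hin

lemma window_faith : ∀ d : ℕ, ∀ a b : ℤ, (b - a).toNat ≤ d →
    ∀ m ∈ Kab H₁ f a b, m ≠ 1 →
      ∃ u ∈ H₁ ⊔ Subgroup.zpowers f, ⇑m '' (⇑u '' W₀) ≠ ⇑u '' W₀ := by
  intro d
  induction d with
  | zero =>
      intro a b hd m hm hm1
      by_cases hab : a ≤ b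
      · refine window_step hs hab ?_ m hm hm1
        intro m' hm' hm'1
        exfalso
        apply hm'1
        rw [Kab_bot (by omega : b - 1 < a)] at hm'
        exact Subgroup.mem_bot.mp hm'
      · exfalso
        apply hm1
        rw [Kab_bot (by omega : b < a)] at hm
        exact Subgroup.mem_bot.mp hm
  | succ d ih =>
      intro a b hd m hm hm1
      by_cases hab : a ≤ b
      · refine window_step hs hab ?_ m hm hm1
        intro m' hm' hm'1
        by_cases hab2 : a ≤ b - 1
        · exact ih a (b - 1) (by omega) m' hm' hm'1
        · exfalso
          apply hm'1
          rw [Kab_bot (by omega : b - 1 < a)] at hm'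
          exact Subgroup.mem_bot.mp hm'
      · exfalso
        apply hm1
        rw [Kab_bot (by omega : b < a)] at hm
        exact Subgroup.mem_bot.mp hm

lemma condition_iii : ∀ v ∈ H₁ ⊔ Subgroup.zpowers f, v ≠ 1 →
    ∃ u ∈ H₁ ⊔ Subgroup.zpowers f, ⇑v '' (⇑u '' W₀) ≠ ⇑u '' W₀ := by
  intro v hv hv1
  obtain ⟨n, m, hm, rfl⟩ := V_eq_f_M v hv
  by_cases hm1 : m = 1
  · subst hm1
    have hn : n ≠ 0 := by
      rintro rfl
      apply hv1
      group
    refine ⟨1, one_mem _, ?_⟩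
    have h1 : ⇑(1 : Equiv.Perm Z) '' W₀ = W₀ := by simp
    rw [h1, mul_one]
    show Wseq W₀ f n ≠ W₀
    apply ne_of_disj_nonempty
    · have h2 := Wab_disj hs (a := n) (b := 0) hn
      rwa [Wseq_zero] at h2
    · exact (W0_nonempty hs).image _
  · obtain ⟨a, b, hab, hmK⟩ := mem_window m hm
    by_cases hn : n = 0
    · subst hn
      have hveq : f ^ (0 : ℤ) * m = m := by
        rw [zpow_zero, one_mul]
      rw [hveq]
      exact window_faith hs ((b - a).toNat) a b (le_refl _) m hmK hm1
    · refine ⟨f ^ (b + 1), fpow_mem_V _, ?_⟩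
      have hWfix : ⇑m '' (⇑(f ^ (b + 1)) '' W₀) = ⇑(f ^ (b + 1)) '' W₀ := by
        apply fix_img
        intro t ht
        apply Kab_le_fixingOutside hs a b hmK
        intro htY
        have hx : t ∈ Wseq W₀ f (b + 1) ∩ Wseq Y₀ f ((b + 1) - 1) := by
          refine ⟨ht, ?_⟩
          have he : (b + 1) - 1 = b := by ring
          rwa [he]
        rw [Wk_disj_Yk1 hs (b + 1)] at hx
        exact hx
      have hcomp : ⇑(f ^ n * m) '' (⇑(f ^ (b + 1)) '' W₀) = Wseq W₀ f (n + (b + 1)) := by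
        rw [mul_img, hWfix]
        exact (Wseq_add W₀ n (b + 1)).symm
      rw [hcomp]
      apply ne_of_disj_nonempty
      · exact Wab_disj hs (by omega : n + (b + 1) ≠ b + 1)
      · exact (W0_nonempty hs).image _

end Setting

end Stmt15

end
open Stmt15

/-- In the inductive setting, with `V = ⟨H₁, f⟩`:
`(Z, Y₁ ∪ Supp(f), V, W₀)` is a pre-wreath structure whose carrier `{W₀v : v ∈ V}` is
the union over `n ∈ ℤ` of the families `{W₀rfⁿ : r ∈ R₁}` (apply `r` first, then
`fⁿ`). -/
theorem stmt15 {Z : Type*} (H₁ : Subgroup (Equiv.Perm Z)) (f : Equiv.Perm Z)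
    (Y₀ W₀ : Set Z) (hsetting : InductiveSetting H₁ f Y₀ W₀) :
    IsPreWreath (⇑f '' Y₀ ∪ {z : Z | f z ≠ z}) (H₁ ⊔ Subgroup.zpowers f) W₀ ∧
    wreathCarrier (H₁ ⊔ Subgroup.zpowers f) W₀
      = {A : Set Z | ∃ n : ℤ, ∃ r ∈ Rseq H₁ f 1, A = ⇑(f ^ n) '' (⇑r '' W₀)} := by
  constructor
  · refine ⟨?_, ?_, ?_, ?_, ?_, ?_⟩
    · intro hbot
      apply hsetting.1.1
      have h1 : H₁ ≤ H₁ ⊔ Subgroup.zpowers f := le_sup_left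
      rw [hbot] at h1
      exact le_bot_iff.mp h1
    · exact fun h hh z hz => condition_i hsetting hh z hz
    · intro w hw
      left
      rw [← Y1_eq hsetting]
      exact Y0_sub_Y1 hsetting (W0_sub_Y0 hsetting hw)
    · exact W0_nonempty hsetting
    · exact condition_ii hsetting
    · exact condition_iii hsetting
  · exact carrier_eq hsetting
end

section
/- Assume the inductive setting, with f an element of Sym(Z), and let V be the subgroup of Sym(Z) generated by H₁ together with f. Then every nontrivial normal subgroup N of V contains a subgroup S together with a surjective group homomorphism from S onto L₀. -/
theorem Equiv.Perm.apply_inv_self {α : Type*} (e : Equiv.Perm α) (x : α) : e (e⁻¹ x) = x :=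
  e.apply_symm_apply x

theorem Equiv.Perm.inv_apply_self {α : Type*} (e : Equiv.Perm α) (x : α) : e⁻¹ (e x) = x :=
  e.symm_apply_apply x

theorem Equiv.apply_inv_self {α : Type*} (e : Equiv.Perm α) (x : α) : e (e⁻¹ x) = x :=
  e.apply_symm_apply x

theorem Equiv.inv_apply_self {α : Type*} (e : Equiv.Perm α) (x : α) : e⁻¹ (e x) = x :=
  e.symm_apply_apply x

namespace Stmt16Aux


variable {Z : Type*}

/-- `g` is supported inside `A`: it fixes every point outside `A`. -/
def FixOut (g : Equiv.Perm Z) (A : Set Z) : Prop := ∀ z, z ∉ A → g z = z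

theorem FixOut.one (A : Set Z) : FixOut (1 : Equiv.Perm Z) A := fun z _ => rfl

theorem FixOut.mul {g g' : Equiv.Perm Z} {A : Set Z} (hg : FixOut g A) (hg' : FixOut g' A) :
    FixOut (g * g') A := fun z hz => by
  simp only [Equiv.Perm.mul_apply, hg' z hz, hg z hz]

theorem FixOut.inv {g : Equiv.Perm Z} {A : Set Z} (hg : FixOut g A) : FixOut g⁻¹ A := by
  intro z hz
  exact g.injective (by rw [Equiv.Perm.apply_inv_self, hg z hz])

theorem FixOut.mono {g : Equiv.Perm Z} {A B : Set Z} (hg : FixOut g A) (hAB : A ⊆ B) :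
    FixOut g B := fun z hz => hg z (fun h => hz (hAB h))

theorem FixOut.mem_of_mem {g : Equiv.Perm Z} {A : Set Z} (hg : FixOut g A) {z : Z} (hz : z ∈ A) :
    g z ∈ A := by
  by_contra hgz
  have h1 := hg (g z) hgz
  have h2 : g z = z := g.injective h1
  rw [h2] at hgz
  exact hgz hz

theorem FixOut.image_eq {g : Equiv.Perm Z} {A : Set Z} (hg : FixOut g A) : ⇑g '' A = A := by
  apply Set.Subset.antisymm
  · rintro _ ⟨z, hz, rfl⟩; exact hg.mem_of_mem hz
  · intro z hz
    exact ⟨g⁻¹ z, hg.inv.mem_of_mem hz, g.apply_inv_self z⟩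

theorem image_eq_of_fix {g : Equiv.Perm Z} {A : Set Z} (h : ∀ z ∈ A, g z = z) : ⇑g '' A = A := by
  apply Set.Subset.antisymm
  · rintro _ ⟨z, hz, rfl⟩; rw [h z hz]; exact hz
  · intro z hz; exact ⟨z, hz, h z hz⟩

/-- conjugation transports supports. -/
theorem FixOut.conj {g σ : Equiv.Perm Z} {A : Set Z} (hg : FixOut g A) :
    FixOut (σ * g * σ⁻¹) (⇑σ '' A) := by
  intro z hz
  have h1 : σ⁻¹ z ∉ A := by
    intro h; exact hz ⟨σ⁻¹ z, h, σ.apply_inv_self z⟩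
  simp only [Equiv.Perm.mul_apply, hg _ h1, Equiv.Perm.apply_inv_self]

/-- if `σ` fixes `A` pointwise and `g` is supported in `A`, then `σ g σ⁻¹ = g`. -/
theorem conj_eq_self {g σ : Equiv.Perm Z} {A : Set Z} (hg : FixOut g A)
    (hσ : ∀ z ∈ A, σ z = z) : σ * g * σ⁻¹ = g := by
  ext z
  by_cases hz : z ∈ A
  · have hσz : σ⁻¹ z = z := σ.injective (by rw [Equiv.Perm.apply_inv_self, hσ z hz])
    simp only [Equiv.Perm.mul_apply, hσz]
    exact hσ _ (hg.mem_of_mem hz)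
  · have hσz : σ⁻¹ z ∉ A := by
      intro h
      have : σ (σ⁻¹ z) = σ⁻¹ z := hσ _ h
      rw [Equiv.Perm.apply_inv_self] at this
      exact hz (this ▸ h)
    simp only [Equiv.Perm.mul_apply, hg _ hσz, Equiv.Perm.apply_inv_self, hg z hz]

theorem eq_of_agree_on {g g' : Equiv.Perm Z} {A : Set Z} (hg : FixOut g A) (hg' : FixOut g' A)
    (h : ∀ z ∈ A, g z = g' z) : g = g' := by
  ext z
  by_cases hz : z ∈ A
  · exact h z hz
  · rw [hg z hz, hg' z hz]

section Setting

variable {Z : Type*} {H₁ : Subgroup (Equiv.Perm Z)} {f : Equiv.Perm Z} {Y₀ W₀ : Set Z}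

/-- `Yᵢ = Y₀ fⁱ`. -/
def YS (f : Equiv.Perm Z) (Y₀ : Set Z) (i : ℤ) : Set Z := ⇑(f ^ i) '' Y₀

theorem zpow_image (f : Equiv.Perm Z) (a c : ℤ) (S : Set Z) :
    ⇑(f ^ a) '' (⇑(f ^ c) '' S) = ⇑(f ^ (a + c)) '' S := by
  rw [← Set.image_comp]
  congr 1
  rw [zpow_add]
  rfl

theorem zpow_image_f (f : Equiv.Perm Z) (a : ℤ) (S : Set Z) :
    ⇑(f ^ a) '' (⇑f '' S) = ⇑(f ^ (a + 1)) '' S := by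
  rw [← Set.image_comp]
  congr 1
  rw [zpow_add_one]
  rfl

theorem conj_image (σ g : Equiv.Perm Z) (S : Set Z) :
    ⇑(σ * g * σ⁻¹) '' (⇑σ '' S) = ⇑σ '' (⇑g '' S) := by
  rw [← Set.image_comp, ← Set.image_comp]
  congr 1
  ext z
  simp [Equiv.Perm.mul_apply]

/-- membership in `Hseq`. -/
theorem mem_Hseq {i : ℤ} {u : Equiv.Perm Z} :
    u ∈ Hseq H₁ f i ↔ ∃ h ∈ H₁, u = f ^ (i - 1) * h * (f ^ (i - 1))⁻¹ := by
  constructor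
  · rintro ⟨h, hh, rfl⟩
    exact ⟨h, hh, rfl⟩
  · rintro ⟨h, hh, rfl⟩
    exact ⟨h, hh, rfl⟩

/-- `Supp` of a conjugated subgroup. -/
theorem supp_conj (σ : Equiv.Perm Z) (K : Subgroup (Equiv.Perm Z)) :
    Supp (Subgroup.map (MulAut.conj σ).toMonoidHom K) = ⇑σ '' Supp K := by
  ext z
  constructor
  · rintro ⟨g, ⟨h, hh, rfl⟩, hgz⟩
    refine ⟨σ⁻¹ z, ⟨h, hh, fun he => hgz ?_⟩, σ.apply_inv_self z⟩
    simp only [MulAut.conj_apply, MulEquiv.coe_toMonoidHom] at *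
    simp only [Equiv.Perm.mul_apply, he, Equiv.Perm.apply_inv_self]
  · rintro ⟨w, ⟨h, hh, hw⟩, rfl⟩
    refine ⟨σ * h * σ⁻¹, ⟨h, hh, rfl⟩, fun he => hw ?_⟩
    simpa using σ.injective (by simpa [Equiv.Perm.mul_apply] using he)

theorem YS_eq_sigma_Y1 (f : Equiv.Perm Z) (Y₀ : Set Z) (b : ℤ) :
    YS f Y₀ b = ⇑(f ^ (b - 1)) '' (⇑f '' Y₀) := by
  show ⇑(f ^ b) '' Y₀ = _
  rw [zpow_image_f, sub_add_cancel]

variable (hs : InductiveSetting H₁ f Y₀ W₀)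
include hs

theorem Y01 : Y₀ ⊆ ⇑f '' Y₀ := hs.1.2.2.1

theorem YS_mono : ∀ {i j : ℤ}, i ≤ j → YS f Y₀ i ⊆ YS f Y₀ j := by
  have step : ∀ i : ℤ, YS f Y₀ i ⊆ YS f Y₀ (i + 1) := by
    intro i
    have h1 : ⇑(f ^ i) '' Y₀ ⊆ ⇑(f ^ i) '' (⇑f '' Y₀) := Set.image_mono (Y01 hs)
    rw [zpow_image_f] at h1
    exact h1
  intro i j hij
  exact Int.le_induction (motive := fun j _ => YS f Y₀ i ⊆ YS f Y₀ j) (le_refl _) (fun k _ ih => ih.trans (step k)) j hij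

theorem Hseq_fixOut {i : ℤ} {u : Equiv.Perm Z} (hu : u ∈ Hseq H₁ f i) : FixOut u (YS f Y₀ i) := by
  rcases mem_Hseq.mp hu with ⟨h, hh, rfl⟩
  have h1 : FixOut h (⇑f '' Y₀) := fun z hz => hs.1.2.1 h hh z hz
  rw [YS_eq_sigma_Y1]
  exact h1.conj

/-- every point of `Y_(i-1)` is moved by some element of `H_i`. -/
theorem Hseq_moves {i : ℤ} {z : Z} (hz : z ∈ YS f Y₀ (i - 1)) : ∃ u ∈ Hseq H₁ f i, u z ≠ z := by
  rcases hz with ⟨w, hw, rfl⟩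
  rcases hs.2.1 hw with ⟨h, hh, hmov⟩
  refine ⟨f ^ (i - 1) * h * (f ^ (i - 1))⁻¹, mem_Hseq.mpr ⟨h, hh, rfl⟩, fun he => hmov ?_⟩
  simp only [Equiv.Perm.mul_apply, Equiv.Perm.inv_apply_self] at he
  exact (f ^ (i - 1)).injective he

/-- pre-wreath axiom (ii) at level `b` : overlapping translates of `Y_(b-1)` force triviality. -/
theorem axiom_ii {b : ℤ} {h : Equiv.Perm Z} (hh : h ∈ Hseq H₁ f b)
    (hne : (⇑h '' YS f Y₀ (b - 1) ∩ YS f Y₀ (b - 1)).Nonempty) :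
    ∀ x ∈ YS f Y₀ (b - 1), h x = x := by
  rcases mem_Hseq.mp hh with ⟨h₀, hh₀, rfl⟩
  have himg : ⇑(f ^ (b - 1) * h₀ * (f ^ (b - 1))⁻¹) '' YS f Y₀ (b - 1)
      = ⇑(f ^ (b - 1)) '' (⇑h₀ '' Y₀) := conj_image _ _ _
  rcases hne with ⟨x, hx1, hx2⟩
  rw [himg] at hx1
  rcases hx1 with ⟨w, hw, rfl⟩
  rcases hx2 with ⟨w', hw', hww'⟩
  have hww'2 : w' = w := (f ^ (b - 1)).injective hww'
  have hprop : (⇑h₀ '' Y₀ ∩ Y₀).Nonempty := ⟨w', ⟨by rw [hww'2]; exact hw, hw'⟩⟩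
  have hid := hs.1.2.2.2.2.1 h₀ hh₀ hprop
  rintro _ ⟨y, hy, rfl⟩
  show (f ^ (b - 1)) (h₀ ((f ^ (b - 1))⁻¹ ((f ^ (b - 1)) y))) = (f ^ (b - 1)) y
  rw [Equiv.Perm.inv_apply_self, hid y hy]

/-- pre-wreath axiom (iii) at level `b`. -/
theorem axiom_iii {b : ℤ} {h : Equiv.Perm Z} (hh : h ∈ Hseq H₁ f b) (hne : h ≠ 1) :
    ∃ u ∈ Hseq H₁ f b, ⇑h '' (⇑u '' YS f Y₀ (b - 1)) ≠ ⇑u '' YS f Y₀ (b - 1) := by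
  rcases mem_Hseq.mp hh with ⟨h₀, hh₀, rfl⟩
  have hne0 : h₀ ≠ 1 := by
    rintro rfl; simp at hne
  rcases hs.1.2.2.2.2.2 h₀ hh₀ hne0 with ⟨j, hj, hjmov⟩
  refine ⟨f ^ (b - 1) * j * (f ^ (b - 1))⁻¹, mem_Hseq.mpr ⟨j, hj, rfl⟩, fun he => hjmov ?_⟩
  rw [show YS f Y₀ (b - 1) = ⇑(f ^ (b - 1)) '' Y₀ from rfl, conj_image, conj_image] at he
  exact (f ^ (b - 1)).injective.image_injective he

end Setting

section Groups

variable {Z : Type*} {H₁ : Subgroup (Equiv.Perm Z)} {f : Equiv.Perm Z} {Y₀ W₀ : Set Z}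

/-- the subgroup generated by `H_i`, `a ≤ i ≤ b`. -/
def Kab (H₁ : Subgroup (Equiv.Perm Z)) (f : Equiv.Perm Z) (a b : ℤ) : Subgroup (Equiv.Perm Z) :=
  Subgroup.closure (⋃ i ∈ Set.Icc a b, (Hseq H₁ f i : Set (Equiv.Perm Z)))

theorem Hseq_le_Kab {a b i : ℤ} (hi : i ∈ Set.Icc a b) : Hseq H₁ f i ≤ Kab H₁ f a b := by
  intro u hu
  exact Subgroup.subset_closure (Set.mem_biUnion hi hu)

theorem Kab_mono {a b a' b' : ℤ} (ha : a' ≤ a) (hb : b ≤ b') : Kab H₁ f a b ≤ Kab H₁ f a' b' := by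
  apply Subgroup.closure_mono
  apply Set.iUnion₂_subset
  intro i hi
  exact Set.subset_biUnion_of_mem (u := fun i => (Hseq H₁ f i : Set (Equiv.Perm Z))) (Set.Icc_subset_Icc ha hb hi)

theorem Hseq_le_V (i : ℤ) : Hseq H₁ f i ≤ H₁ ⊔ Subgroup.zpowers f := by
  intro u hu
  rcases mem_Hseq.mp hu with ⟨h, hh, rfl⟩
  have h1 : f ^ (i - 1) ∈ H₁ ⊔ Subgroup.zpowers f :=
    le_sup_right (α := Subgroup (Equiv.Perm Z)) (a := H₁) (Subgroup.zpow_mem _ (Subgroup.mem_zpowers f) _)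
  exact mul_mem (mul_mem h1 (le_sup_left (α := Subgroup (Equiv.Perm Z)) (b := Subgroup.zpowers f) hh)) (inv_mem h1)

theorem Kab_le_V {a b : ℤ} : Kab H₁ f a b ≤ H₁ ⊔ Subgroup.zpowers f := by
  apply Subgroup.closure_le _ |>.mpr
  apply Set.iUnion₂_subset
  intro i _
  exact Hseq_le_V i

theorem Mgrp_le_V : Mgrp H₁ f ≤ H₁ ⊔ Subgroup.zpowers f := by
  apply Subgroup.closure_le _ |>.mpr
  apply Set.iUnion_subset
  intro i
  exact Hseq_le_V i

theorem Lseq_le_V (i : ℤ) : Lseq H₁ f i ≤ H₁ ⊔ Subgroup.zpowers f := by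
  apply Subgroup.closure_le _ |>.mpr
  apply Set.iUnion₂_subset
  intro j _
  exact Hseq_le_V j

theorem Hseq_le_M (i : ℤ) : Hseq H₁ f i ≤ Mgrp H₁ f := by
  intro u hu
  exact Subgroup.subset_closure (Set.mem_iUnion.mpr ⟨i, hu⟩)

theorem H1_le_M : H₁ ≤ Mgrp H₁ f := by
  intro x hx
  apply Hseq_le_M 1
  exact mem_Hseq.mpr ⟨x, hx, by simp⟩

theorem Hseq_conj_shift {i : ℤ} (k : ℤ) {u : Equiv.Perm Z} (hu : u ∈ Hseq H₁ f i) :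
    f ^ k * u * (f ^ k)⁻¹ ∈ Hseq H₁ f (i + k) := by
  rcases mem_Hseq.mp hu with ⟨h, hh, rfl⟩
  refine mem_Hseq.mpr ⟨h, hh, ?_⟩
  have : f ^ (i + k - 1) = f ^ k * f ^ (i - 1) := by
    rw [← zpow_add]; congr 1; ring
  rw [this]
  group

theorem Mgrp_conj (k : ℤ) {g : Equiv.Perm Z} (hg : g ∈ Mgrp H₁ f) :
    f ^ k * g * (f ^ k)⁻¹ ∈ Mgrp H₁ f := by
  induction hg using Subgroup.closure_induction with
  | mem x hx =>
    rcases Set.mem_iUnion.mp hx with ⟨i, hi⟩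
    exact Hseq_le_M (i + k) (Hseq_conj_shift k hi)
  | one => simpa using one_mem (Mgrp H₁ f)
  | mul x y _ _ hx hy =>
    have : f ^ k * (x * y) * (f ^ k)⁻¹ = (f ^ k * x * (f ^ k)⁻¹) * (f ^ k * y * (f ^ k)⁻¹) := by
      group
    rw [this]; exact mul_mem hx hy
  | inv x _ hx =>
    have : f ^ k * x⁻¹ * (f ^ k)⁻¹ = (f ^ k * x * (f ^ k)⁻¹)⁻¹ := by group
    rw [this]; exact inv_mem hx

/-- every element of `V = H₁ ⊔ ⟨f⟩` decomposes as `m * f^k` with `m ∈ M`. -/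
theorem V_decomp {v : Equiv.Perm Z} (hv : v ∈ H₁ ⊔ Subgroup.zpowers f) :
    ∃ m ∈ Mgrp H₁ f, ∃ k : ℤ, v = m * f ^ k := by
  rw [Subgroup.sup_eq_closure] at hv
  induction hv using Subgroup.closure_induction with
  | mem x hx =>
    rcases hx with hx | hx
    · exact ⟨x, H1_le_M hx, 0, by simp⟩
    · rcases hx with ⟨k, rfl⟩
      exact ⟨1, one_mem _, k, by simp⟩
  | one => exact ⟨1, one_mem _, 0, by simp⟩
  | mul x y _ _ hx hy =>
    rcases hx with ⟨m, hm, k, rfl⟩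
    rcases hy with ⟨m', hm', j, rfl⟩
    refine ⟨m * (f ^ k * m' * (f ^ k)⁻¹), mul_mem hm (Mgrp_conj k hm'), k + j, by group⟩
  | inv x _ hx =>
    rcases hx with ⟨m, hm, k, rfl⟩
    refine ⟨f ^ (-k) * m⁻¹ * (f ^ (-k))⁻¹, Mgrp_conj (-k) (inv_mem hm), -k, by group⟩

theorem exists_Kab {g : Equiv.Perm Z} (hg : g ∈ Mgrp H₁ f) :
    ∃ n : ℕ, g ∈ Kab H₁ f (-(n : ℤ)) n := by
  have hdir : Directed (· ≤ ·) (fun n : ℕ => Kab H₁ f (-(n : ℤ)) n) := by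
    intro a b
    refine ⟨max a b, Kab_mono (by simp) (by simp), Kab_mono (by simp) (by simp)⟩
  have hle : Mgrp H₁ f ≤ ⨆ n : ℕ, Kab H₁ f (-(n : ℤ)) n := by
    apply Subgroup.closure_le _ |>.mpr
    apply Set.iUnion_subset
    intro i u hu
    have h1 : u ∈ Kab H₁ f (-(i.natAbs : ℤ)) i.natAbs := by
      apply Hseq_le_Kab (i := i) _ hu
      simp only [Set.mem_Icc]
      omega
    exact Subgroup.mem_iSup_of_directed hdir |>.mpr ⟨i.natAbs, h1⟩ |> fun h => h
  exact (Subgroup.mem_iSup_of_directed hdir).mp (hle hg)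

variable (hs : InductiveSetting H₁ f Y₀ W₀)
include hs

theorem Kab_fixOut {a b : ℤ} {g : Equiv.Perm Z} (hg : g ∈ Kab H₁ f a b) :
    FixOut g (YS f Y₀ b) := by
  induction hg using Subgroup.closure_induction with
  | mem x hx =>
    rcases Set.mem_iUnion₂.mp hx with ⟨i, hi, hxi⟩
    exact (Hseq_fixOut hs hxi).mono (YS_mono hs hi.2)
  | one => exact FixOut.one _
  | mul x y _ _ hx hy => exact hx.mul hy
  | inv x _ hx => exact hx.inv

/-- elements of `H_i` fix `W_j` pointwise, for `i ≤ j`. -/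
theorem Hseq_fix_W {i j : ℤ} (hij : i ≤ j) {u : Equiv.Perm Z} (hu : u ∈ Hseq H₁ f i)
    {z : Z} (hz : z ∈ Wseq W₀ f j) : u z = z := by
  by_contra hne
  have hsupp : z ∈ Supp (Hseq H₁ f i) := ⟨u, hu, hne⟩
  have hsc : Supp (Hseq H₁ f i) = ⇑(f ^ (i - 1)) '' Supp H₁ := supp_conj _ _
  -- z lies in f^(j-1) '' Supp H₁
  have hz1 : z ∈ ⇑(f ^ (j - 1)) '' Supp H₁ := by
    rcases eq_or_lt_of_le hij with rfl | hlt
    · rw [hsc] at hsupp; exact hsupp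
    · have h1 : Supp (Hseq H₁ f i) ⊆ YS f Y₀ i := by
        rw [hsc]
        intro w hw
        rcases hw with ⟨s, hsm, rfl⟩
        have : s ∈ ⇑f '' Y₀ := hs.2.2.1 hsm
        rcases this with ⟨y, hy, rfl⟩
        refine ⟨y, hy, ?_⟩
        show (f ^ i) y = (f ^ (i - 1)) (f y)
        have : f ^ i = f ^ (i - 1) * f := by rw [← zpow_add_one]; congr 1; ring
        rw [this]; rfl
      have h2 : z ∈ YS f Y₀ (j - 1) := YS_mono hs (by omega) (h1 hsupp)
      rcases h2 with ⟨y, hy, rfl⟩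
      exact ⟨y, hs.2.1 hy, rfl⟩
  -- z lies in f^(j-1) '' (f '' W₀)
  have hz2 : z ∈ ⇑(f ^ (j - 1)) '' (⇑f '' W₀) := by
    rcases hz with ⟨w, hw, rfl⟩
    have : (⇑(f ^ (j - 1)) '' (⇑f '' W₀)) = ⇑(f ^ j) '' W₀ := by
      rw [zpow_image_f, sub_add_cancel]
    rw [this]
    exact ⟨w, hw, rfl⟩
  rcases hz1 with ⟨s, hsm, hse⟩
  rcases hz2 with ⟨w, hw, hwe⟩
  have : w = s := (f ^ (j - 1)).injective (hwe.trans hse.symm)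
  have : w ∈ (⇑f '' W₀) ∩ Supp H₁ := ⟨hw, this ▸ hsm⟩
  rw [hs.2.2.2.2.2.2] at this
  exact this

theorem Kab_fix_W {a b j : ℤ} (hbj : b ≤ j) {g : Equiv.Perm Z} (hg : g ∈ Kab H₁ f a b)
    {z : Z} (hz : z ∈ Wseq W₀ f j) : g z = z := by
  induction hg using Subgroup.closure_induction with
  | mem x hx =>
    rcases Set.mem_iUnion₂.mp hx with ⟨i, hi, hxi⟩
    exact Hseq_fix_W hs (le_trans hi.2 hbj) hxi hz
  | one => rfl
  | mul x y _ _ hx hy => simp only [Equiv.Perm.mul_apply, hy, hx]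
  | inv x _ hx => exact x.injective (by rw [Equiv.Perm.apply_inv_self, hx])

end Groups

section MainInduction

variable {Z : Type*} {H₁ : Subgroup (Equiv.Perm Z)} {f : Equiv.Perm Z} {Y₀ W₀ : Set Z}

theorem mul_image (g u : Equiv.Perm Z) (S : Set Z) : ⇑(g * u) '' S = ⇑g '' (⇑u '' S) := by
  rw [← Set.image_comp]; rfl

/-- the subgroup generated by the `H_b`-conjugates of `Kab a (b-1)`. -/
def PiG (H₁ : Subgroup (Equiv.Perm Z)) (f : Equiv.Perm Z) (a b : ℤ) : Subgroup (Equiv.Perm Z) :=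
  Subgroup.closure (⋃ h ∈ (Hseq H₁ f b : Set (Equiv.Perm Z)),
    (fun k => h * k * h⁻¹) '' (Kab H₁ f a (b - 1) : Set (Equiv.Perm Z)))

theorem mem_PiG_gen {a b : ℤ} {h k : Equiv.Perm Z} (hh : h ∈ Hseq H₁ f b)
    (hk : k ∈ Kab H₁ f a (b - 1)) : h * k * h⁻¹ ∈ PiG H₁ f a b :=
  Subgroup.subset_closure (Set.mem_iUnion₂.mpr ⟨h, hh, ⟨k, hk, rfl⟩⟩)

theorem PiG_conj {a b : ℤ} {h p : Equiv.Perm Z} (hh : h ∈ Hseq H₁ f b) (hp : p ∈ PiG H₁ f a b) :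
    h * p * h⁻¹ ∈ PiG H₁ f a b := by
  induction hp using Subgroup.closure_induction with
  | mem x hx =>
    rcases Set.mem_iUnion₂.mp hx with ⟨h', hh', ⟨k, hk, rfl⟩⟩
    have : h * (h' * k * h'⁻¹) * h⁻¹ = (h * h') * k * (h * h')⁻¹ := by group
    rw [this]
    exact mem_PiG_gen (mul_mem hh hh') hk
  | one => simpa using one_mem (PiG H₁ f a b)
  | mul x y _ _ hx hy =>
    have : h * (x * y) * h⁻¹ = (h * x * h⁻¹) * (h * y * h⁻¹) := by group
    rw [this]; exact mul_mem hx hy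
  | inv x _ hx =>
    have : h * x⁻¹ * h⁻¹ = (h * x * h⁻¹)⁻¹ := by group
    rw [this]; exact inv_mem hx

theorem Kab_le_PiG {a b : ℤ} : Kab H₁ f a (b - 1) ≤ PiG H₁ f a b := by
  intro k hk
  have : k = 1 * k * 1⁻¹ := by group
  rw [this]
  exact mem_PiG_gen (one_mem _) hk

variable (hs : InductiveSetting H₁ f Y₀ W₀)
include hs

theorem YS_nonempty (i : ℤ) : (YS f Y₀ i).Nonempty :=
  (hs.1.2.2.2.1).image _

/-- translates of `Y_(b-1)` by `H_b` are equal or disjoint. -/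
theorem blocks_eq_or_disjoint {b : ℤ} {h h' : Equiv.Perm Z} (hh : h ∈ Hseq H₁ f b)
    (hh' : h' ∈ Hseq H₁ f b) :
    ⇑h '' YS f Y₀ (b - 1) = ⇑h' '' YS f Y₀ (b - 1) ∨
      ⇑h '' YS f Y₀ (b - 1) ∩ ⇑h' '' YS f Y₀ (b - 1) = ∅ := by
  by_cases hne : (⇑h '' YS f Y₀ (b - 1) ∩ ⇑h' '' YS f Y₀ (b - 1)).Nonempty
  · left
    set Y := YS f Y₀ (b - 1)
    have hw : h'⁻¹ * h ∈ Hseq H₁ f b := mul_mem (inv_mem hh') hh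
    have hne2 : (⇑(h'⁻¹ * h) '' Y ∩ Y).Nonempty := by
      rcases hne with ⟨x, ⟨y, hy, rfl⟩, ⟨y', hy', hyy'⟩⟩
      refine ⟨h'⁻¹ (h y), ⟨y, hy, rfl⟩, ?_⟩
      rw [← hyy', Equiv.Perm.inv_apply_self]
      exact hy'
    have hid := axiom_ii hs hw hne2
    have himg : ⇑(h'⁻¹ * h) '' Y = Y := image_eq_of_fix hid
    calc ⇑h '' Y = ⇑(h' * (h'⁻¹ * h)) '' Y := by rw [mul_inv_cancel_left]
    _ = ⇑h' '' (⇑(h'⁻¹ * h) '' Y) := mul_image _ _ _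
    _ = ⇑h' '' Y := by rw [himg]
  · right
    exact Set.not_nonempty_iff_eq_empty.mp hne

theorem PiG_gen_fixOut {a b : ℤ} {h k : Equiv.Perm Z} (hh : h ∈ Hseq H₁ f b)
    (hk : k ∈ Kab H₁ f a (b - 1)) :
    FixOut (h * k * h⁻¹) (⇑h '' YS f Y₀ (b - 1)) :=
  (Kab_fixOut hs hk).conj

/-- every element of `PiG` maps each `H_b`-block onto itself. -/
theorem PiG_preserves {a b : ℤ} {p : Equiv.Perm Z} (hp : p ∈ PiG H₁ f a b)
    {h : Equiv.Perm Z} (hh : h ∈ Hseq H₁ f b) :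
    ⇑p '' (⇑h '' YS f Y₀ (b - 1)) = ⇑h '' YS f Y₀ (b - 1) := by
  induction hp using Subgroup.closure_induction with
  | mem x hx =>
    rcases Set.mem_iUnion₂.mp hx with ⟨h', hh', ⟨k, hk, rfl⟩⟩
    rcases blocks_eq_or_disjoint hs hh hh' with heq | hdisj
    · rw [heq]
      exact (PiG_gen_fixOut hs hh' hk).image_eq
    · apply image_eq_of_fix
      intro z hz
      apply PiG_gen_fixOut hs hh' hk
      intro hz'
      have : z ∈ (∅ : Set Z) := hdisj ▸ ⟨hz, hz'⟩
      exact this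
  | one => simp
  | mul x y _ _ hx hy => rw [mul_image, hy, hx]
  | inv x _ hx =>
    have := congrArg (Set.image ⇑x⁻¹) hx
    rw [← Set.image_comp] at this
    have hcomp : ⇑x⁻¹ ∘ ⇑x = id := funext fun z => x.inv_apply_self z
    rw [hcomp, Set.image_id] at this
    exact this.symm

theorem PiG_fixOut_union {a b : ℤ} {p : Equiv.Perm Z} (hp : p ∈ PiG H₁ f a b) :
    FixOut p (⋃ h ∈ (Hseq H₁ f b : Set (Equiv.Perm Z)), ⇑h '' YS f Y₀ (b - 1)) := by
  induction hp using Subgroup.closure_induction with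
  | mem x hx =>
    rcases Set.mem_iUnion₂.mp hx with ⟨h', hh', ⟨k, hk, rfl⟩⟩
    exact (PiG_gen_fixOut hs hh' hk).mono
      (Set.subset_biUnion_of_mem (u := fun h : Equiv.Perm Z => ⇑h '' YS f Y₀ (b - 1)) hh')
  | one => exact FixOut.one _
  | mul x y _ _ hx hy => exact hx.mul hy
  | inv x _ hx => exact hx.inv

/-- the component of an element of `PiG` in a block. -/
theorem PiG_component {a b : ℤ} {p : Equiv.Perm Z} (hp : p ∈ PiG H₁ f a b)
    {h : Equiv.Perm Z} (hh : h ∈ Hseq H₁ f b) :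
    ∃ k ∈ Kab H₁ f a (b - 1), ∀ z ∈ ⇑h '' YS f Y₀ (b - 1), p z = (h * k * h⁻¹) z := by
  induction hp using Subgroup.closure_induction with
  | mem x hx =>
    rcases Set.mem_iUnion₂.mp hx with ⟨h', hh', ⟨k, hk, rfl⟩⟩
    rcases blocks_eq_or_disjoint hs hh hh' with heq | hdisj
    · refine ⟨k, hk, ?_⟩
      -- h'⁻¹ * h fixes Y_(b-1) pointwise, so h' k h'⁻¹ = h k h⁻¹
      have hw : h'⁻¹ * h ∈ Hseq H₁ f b := mul_mem (inv_mem hh') hh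
      have hne2 : (⇑(h'⁻¹ * h) '' YS f Y₀ (b - 1) ∩ YS f Y₀ (b - 1)).Nonempty := by
        have himg : ⇑(h'⁻¹ * h) '' YS f Y₀ (b - 1) = YS f Y₀ (b - 1) := by
          rw [mul_image]
          rw [heq]
          have := congrArg (Set.image ⇑h'⁻¹) (rfl : ⇑h' '' YS f Y₀ (b - 1) = ⇑h' '' YS f Y₀ (b - 1))
          rw [← Set.image_comp]
          have hcomp : ⇑h'⁻¹ ∘ ⇑h' = id := funext fun z => h'.inv_apply_self z
          rw [hcomp, Set.image_id]
        obtain ⟨y0, hy0⟩ := YS_nonempty hs (b - 1)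
        exact ⟨y0, by rw [himg]; exact hy0, hy0⟩
      have hid := axiom_ii hs hw hne2
      have hconj : (h⁻¹ * h') * k * (h⁻¹ * h')⁻¹ = k := by
        apply conj_eq_self (Kab_fixOut hs hk)
        intro z hz
        -- (h⁻¹ h') z = z  from  (h'⁻¹ h) z = z
        have h1 := hid z hz
        have : (h'⁻¹ * h) ((h⁻¹ * h') z) = ((h'⁻¹ * h) * (h⁻¹ * h')) z := rfl
        have h2 : (h'⁻¹ * h) * (h⁻¹ * h') = 1 := by group
        have h3 : (h'⁻¹ * h) ((h⁻¹ * h') z) = z := by rw [this, h2]; rfl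
        -- also (h'⁻¹ h) z = z, and h'⁻¹h is injective
        exact (h'⁻¹ * h).injective (h3.trans h1.symm)
      have heq2 : h' * k * h'⁻¹ = h * k * h⁻¹ := by
        calc h' * k * h'⁻¹ = h * ((h⁻¹ * h') * k * (h⁻¹ * h')⁻¹) * h⁻¹ := by group
        _ = h * k * h⁻¹ := by rw [hconj]
      intro z _
      show (h' * k * h'⁻¹) z = (h * k * h⁻¹) z
      rw [heq2]
    · refine ⟨1, one_mem _, fun z hz => ?_⟩
      have h1 : (h' * k * h'⁻¹) z = z := by
        apply PiG_gen_fixOut hs hh' hk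
        intro hz'
        have : z ∈ (∅ : Set Z) := hdisj ▸ ⟨hz, hz'⟩
        exact this
      have h2 : (h * 1 * h⁻¹) z = z := by simp
      rw [h1, h2]
  | one => exact ⟨1, one_mem _, fun z _ => by simp⟩
  | mul x y hxm hym hx hy =>
    rcases hx with ⟨kx, hkx, hkxa⟩
    rcases hy with ⟨ky, hky, hkya⟩
    refine ⟨kx * ky, mul_mem hkx hky, fun z hz => ?_⟩
    have hyz : y z ∈ ⇑h '' YS f Y₀ (b - 1) := by
      have := PiG_preserves hs hym hh
      exact this ▸ ⟨z, hz, rfl⟩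
    have h1 : (x * y) z = x (y z) := rfl
    rw [h1, hkxa _ hyz, hkya z hz]
    have h2 : (h * kx * h⁻¹) * (h * ky * h⁻¹) = h * (kx * ky) * h⁻¹ := by group
    rw [← h2]; rfl
  | inv x hxm hx =>
    rcases hx with ⟨kx, hkx, hkxa⟩
    refine ⟨kx⁻¹, inv_mem hkx, fun z hz => ?_⟩
    have hwmem : (h * kx⁻¹ * h⁻¹) z ∈ ⇑h '' YS f Y₀ (b - 1) :=
      (PiG_gen_fixOut hs hh (inv_mem hkx)).mem_of_mem hz
    have hxw : x ((h * kx⁻¹ * h⁻¹) z) = z := by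
      rw [hkxa _ hwmem]
      have : (h * kx * h⁻¹) * (h * kx⁻¹ * h⁻¹) = 1 := by group
      have h2 : (h * kx * h⁻¹) ((h * kx⁻¹ * h⁻¹) z) = ((h * kx * h⁻¹) * (h * kx⁻¹ * h⁻¹)) z := rfl
      rw [h2, this]; rfl
    exact x.injective (by rw [Equiv.Perm.apply_inv_self, hxw])

/-- decomposition `Kab a b = PiG ⋅ H_b`. -/
theorem Kab_decomp {a b : ℤ} {g : Equiv.Perm Z} (hg : g ∈ Kab H₁ f a b) (hab : a ≤ b) :
    ∃ p ∈ PiG H₁ f a b, ∃ h ∈ Hseq H₁ f b, g = p * h := by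
  induction hg using Subgroup.closure_induction with
  | mem x hx =>
    rcases Set.mem_iUnion₂.mp hx with ⟨i, hi, hxi⟩
    rcases eq_or_lt_of_le hi.2 with rfl | hlt
    · exact ⟨1, one_mem _, x, hxi, by simp⟩
    · have : x ∈ Kab H₁ f a (b - 1) := Hseq_le_Kab ⟨hi.1, by omega⟩ hxi
      exact ⟨x, Kab_le_PiG this, 1, one_mem _, by simp⟩
  | one => exact ⟨1, one_mem _, 1, one_mem _, by simp⟩
  | mul x y _ _ hx hy =>
    rcases hx with ⟨p, hp, h, hh, rfl⟩
    rcases hy with ⟨p', hp', h', hh', rfl⟩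
    refine ⟨p * (h * p' * h⁻¹), mul_mem hp (PiG_conj hh hp'), h * h', mul_mem hh hh', by group⟩
  | inv x _ hx =>
    rcases hx with ⟨p, hp, h, hh, rfl⟩
    refine ⟨h⁻¹ * p⁻¹ * h, ?_, h⁻¹, inv_mem hh, by group⟩
    have : h⁻¹ * p⁻¹ * h = h⁻¹ * p⁻¹ * (h⁻¹)⁻¹ := by group
    rw [this]
    exact PiG_conj (inv_mem hh) (inv_mem hp)

/-- **Key induction**: every nontrivial element of `Kab (b-d) b` moves some translate of
some `Y_(j-1)` completely off itself. -/
theorem main_moves : ∀ d : ℕ, ∀ b : ℤ, ∀ g ∈ Kab H₁ f (b - (d : ℤ)) b, g ≠ 1 →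
    ∃ j : ℤ, j ≤ b ∧ ∃ c ∈ Kab H₁ f (b - (d : ℤ)) b,
      ⇑g '' (⇑c '' YS f Y₀ (j - 1)) ∩ (⇑c '' YS f Y₀ (j - 1)) = ∅ := by
  intro d
  induction d with
  | zero =>
    intro b g hg hgne
    have hg' : g ∈ Hseq H₁ f b := by
      have : Kab H₁ f (b - (0 : ℤ)) b = Hseq H₁ f b := by
        unfold Kab
        rw [show b - (0:ℤ) = b by ring, Set.Icc_self, Set.biUnion_singleton,
          Subgroup.closure_eq]
      rwa [show ((0:ℕ):ℤ) = (0:ℤ) by norm_num, this] at hg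
    rcases axiom_iii hs hg' hgne with ⟨u, hu, hmoves⟩
    have hgu : ⇑g '' (⇑u '' YS f Y₀ (b - 1)) = ⇑(g * u) '' YS f Y₀ (b - 1) :=
      (mul_image g u _).symm
    rcases blocks_eq_or_disjoint hs (mul_mem hg' hu) hu with heq | hdisj
    · exact absurd (hgu.trans heq) hmoves
    · refine ⟨b, le_refl b, u, Hseq_le_Kab ⟨by omega, le_refl b⟩ hu, ?_⟩
      rw [hgu]
      exact hdisj
  | succ d ih =>
    intro b g hg hgne
    set a := b - ((d + 1 : ℕ) : ℤ) with ha
    have hab : a ≤ b := by omega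
    rcases Kab_decomp hs hg hab with ⟨p, hp, h, hh, rfl⟩
    by_cases hmoves : ∃ u ∈ Hseq H₁ f b, ⇑h '' (⇑u '' YS f Y₀ (b - 1)) ≠ ⇑u '' YS f Y₀ (b - 1)
    · rcases hmoves with ⟨u, hu, hmove⟩
      have hhu : ⇑h '' (⇑u '' YS f Y₀ (b - 1)) = ⇑(h * u) '' YS f Y₀ (b - 1) :=
        (mul_image h u _).symm
      rcases blocks_eq_or_disjoint hs (mul_mem hh hu) hu with heq | hdisj
      · exact absurd (hhu.trans heq) hmove
      · refine ⟨b, le_refl b, u, Hseq_le_Kab ⟨by omega, le_refl b⟩ hu, ?_⟩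
        have : ⇑(p * h) '' (⇑u '' YS f Y₀ (b - 1)) = ⇑(h * u) '' YS f Y₀ (b - 1) := by
          rw [mul_image, hhu]
          exact PiG_preserves hs hp (mul_mem hh hu)
        rw [this]
        exact hdisj
    · -- h acts trivially on blocks, hence h = 1 and g = p ∈ PiG
      have hh1 : h = 1 := by
        by_contra hne
        rcases axiom_iii hs hh hne with ⟨u, hu, hm⟩
        exact hmoves ⟨u, hu, hm⟩
      subst hh1
      rw [mul_one] at hg hgne ⊢
      -- find a point moved by p, inside some block
      have : ∃ z, p z ≠ z := by
        by_contra hc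
        push_neg at hc
        exact hgne (Equiv.ext hc)
      rcases this with ⟨z, hz⟩
      have hzblock : z ∈ ⋃ h' ∈ (Hseq H₁ f b : Set (Equiv.Perm Z)), ⇑h' '' YS f Y₀ (b - 1) := by
        by_contra hzb
        exact hz (PiG_fixOut_union hs hp z hzb)
      rcases Set.mem_iUnion₂.mp hzblock with ⟨h₀, hh₀, hzB⟩
      rcases PiG_component hs hp hh₀ with ⟨k, hk, hagree⟩
      have hkne : k ≠ 1 := by
        rintro rfl
        apply hz
        rw [hagree z hzB]
        simp
      -- apply the inductive hypothesis to k at level b - 1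
      have hk' : k ∈ Kab H₁ f ((b - 1) - (d : ℤ)) (b - 1) := by
        have : a = (b - 1) - (d : ℤ) := by push_cast [ha]; ring
        rwa [← this]
      rcases ih (b - 1) k hk' hkne with ⟨j, hjb, c, hc, hdisj⟩
      have hc2 : c ∈ Kab H₁ f a (b - 1) := by
        have : a = (b - 1) - (d : ℤ) := by push_cast [ha]; ring
        rwa [this]
      refine ⟨j, by omega, h₀ * c, ?_, ?_⟩
      · exact mul_mem (Hseq_le_Kab ⟨by omega, le_refl b⟩ hh₀) (Kab_mono (le_refl a) (by omega) hc2)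
      · set S := ⇑c '' YS f Y₀ (j - 1) with hS
        have hSsub : S ⊆ YS f Y₀ (b - 1) := by
          intro w hw
          rcases hw with ⟨y, hy, rfl⟩
          exact (Kab_fixOut hs hc2).mem_of_mem (YS_mono hs (by omega) hy)
        have hA'sub : ⇑h₀ '' S ⊆ ⇑h₀ '' YS f Y₀ (b - 1) := Set.image_mono hSsub
        have himg : ⇑p '' (⇑h₀ '' S) = ⇑h₀ '' (⇑k '' S) := by
          have hcongr : ⇑p '' (⇑h₀ '' S) = ⇑(h₀ * k * h₀⁻¹) '' (⇑h₀ '' S) :=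
            Set.image_congr (fun x hx => hagree x (hA'sub hx))
          rw [hcongr, conj_image]
        rw [mul_image h₀ c, ← hS, himg, ← Set.image_inter h₀.injective, hdisj, Set.image_empty]

/-- every nontrivial element of `M` moves some `V`-translate of some `Y_(j-1)` off itself. -/
theorem Mgrp_moves {g : Equiv.Perm Z} (hg : g ∈ Mgrp H₁ f) (hgne : g ≠ 1) :
    ∃ j : ℤ, ∃ c ∈ H₁ ⊔ Subgroup.zpowers f,
      ⇑g '' (⇑c '' YS f Y₀ (j - 1)) ∩ (⇑c '' YS f Y₀ (j - 1)) = ∅ := by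
  rcases exists_Kab hg with ⟨n, hgk⟩
  have hcast : -(n : ℤ) = (n : ℤ) - ((2 * n : ℕ) : ℤ) := by push_cast; ring
  rw [hcast] at hgk
  rcases main_moves hs (2 * n) n g hgk hgne with ⟨j, _, c, hc, hdisj⟩
  exact ⟨j, c, Kab_le_V hc, hdisj⟩

end MainInduction

section Final

variable {Z : Type*} {H₁ : Subgroup (Equiv.Perm Z)} {f : Equiv.Perm Z} {Y₀ W₀ : Set Z}

theorem conj_comp (a b : Equiv.Perm Z) :
    (MulAut.conj a).toMonoidHom.comp (MulAut.conj b).toMonoidHom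
      = (MulAut.conj (a * b)).toMonoidHom := by
  ext x
  simp only [MonoidHom.comp_apply, MulEquiv.coe_toMonoidHom, MulAut.conj_apply]
  group

theorem Hseq_map_conj (k i : ℤ) :
    Subgroup.map (MulAut.conj (f ^ k)).toMonoidHom (Hseq H₁ f i) = Hseq H₁ f (i + k) := by
  unfold Hseq
  rw [Subgroup.map_map, conj_comp, ← zpow_add, show k + (i - 1) = i + k - 1 by ring]

theorem Lseq_map_conj (j : ℤ) :
    Subgroup.map (MulAut.conj (f ^ (-j))).toMonoidHom (Lseq H₁ f j) = Lseq H₁ f 0 := by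
  unfold Lseq
  rw [MonoidHom.map_closure]
  congr 1
  rw [Set.image_iUnion₂]
  ext x
  simp only [Set.mem_iUnion, Set.mem_setOf_eq]
  constructor
  · rintro ⟨i, hi, hx⟩
    refine ⟨i + -j, ⟨by omega, ?_⟩⟩
    have : (MulAut.conj (f ^ (-j))).toMonoidHom '' (Hseq H₁ f i : Set (Equiv.Perm Z))
        = (Hseq H₁ f (i + -j) : Set (Equiv.Perm Z)) := by
      rw [← Subgroup.coe_map, Hseq_map_conj]
    exact this ▸ hx
  · rintro ⟨i, hi, hx⟩
    refine ⟨i + j, ⟨by omega, ?_⟩⟩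
    have : (MulAut.conj (f ^ (-j))).toMonoidHom '' (Hseq H₁ f (i + j) : Set (Equiv.Perm Z))
        = (Hseq H₁ f i : Set (Equiv.Perm Z)) := by
      rw [← Subgroup.coe_map, Hseq_map_conj, show i + j + -j = i by ring]
    rw [this]
    exact hx

/-- the conjugation isomorphism `L_j ≃* L₀`. -/
noncomputable def LconjIso (H₁ : Subgroup (Equiv.Perm Z)) (f : Equiv.Perm Z) (j : ℤ) :
    ↥(Lseq H₁ f j) ≃* ↥(Lseq H₁ f 0) :=
  ((Subgroup.equivMapOfInjective (Lseq H₁ f j) (MulAut.conj (f ^ (-j))).toMonoidHom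
      (MulAut.conj (f ^ (-j))).injective).trans
    (MulEquiv.subgroupCongr (Lseq_map_conj j)))

variable (hs : InductiveSetting H₁ f Y₀ W₀)
include hs

theorem Lseq_fixOut {j : ℤ} {l : Equiv.Perm Z} (hl : l ∈ Lseq H₁ f j) :
    FixOut l (YS f Y₀ (j - 1)) := by
  induction hl using Subgroup.closure_induction with
  | mem x hx =>
    rcases Set.mem_iUnion₂.mp hx with ⟨i, hi, hxi⟩
    exact (Hseq_fixOut hs hxi).mono (YS_mono hs (by simp only [Set.mem_setOf_eq] at hi; omega))
  | one => exact FixOut.one _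
  | mul x y _ _ hx hy => exact hx.mul hy
  | inv x _ hx => exact hx.inv

/-- shifting case : a normal subgroup element with nonzero `f`-degree yields a nontrivial
element of `N ∩ M`. -/
theorem case_shift {N : Subgroup (Equiv.Perm Z)}
    (hnorm : ∀ v ∈ H₁ ⊔ Subgroup.zpowers f, ∀ n ∈ N, v * n * v⁻¹ ∈ N)
    {n₀ m : Equiv.Perm Z} {k : ℤ} (hn₀ : n₀ ∈ N) (hm : m ∈ Mgrp H₁ f) (hk : 0 < k)
    (he : n₀ = m * f ^ k) : ∃ n ∈ N, n ∈ Mgrp H₁ f ∧ n ≠ 1 := by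
  rcases exists_Kab hm with ⟨t, hmK⟩
  rcases hs.2.2.2.2.1 with ⟨w₀, hw₀⟩
  set z := (f ^ (t : ℤ)) w₀ with hz
  have hzW : z ∈ Wseq W₀ f t := ⟨w₀, hw₀, rfl⟩
  have hzY : z ∈ YS f Y₀ ((t + 1) - 1) := by
    simp only [add_sub_cancel_right]
    exact ⟨w₀, hs.2.2.2.2.2.1 hw₀, rfl⟩
  rcases Hseq_moves hs hzY with ⟨u, hu, huz⟩
  -- n₀ z = f^k z ∈ W_(t+k), which u fixes
  have hfkz : (f ^ k) z ∈ Wseq W₀ f ((t : ℤ) + k) := by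
    refine ⟨w₀, hw₀, ?_⟩
    show (f ^ ((t : ℤ) + k)) w₀ = (f ^ k) ((f ^ (t : ℤ)) w₀)
    rw [show (t : ℤ) + k = k + t by ring, zpow_add]
    rfl
  have hmz : m ((f ^ k) z) = (f ^ k) z := Kab_fix_W hs (by omega) hmK hfkz
  have hn₀z : n₀ z = (f ^ k) z := by rw [he]; exact hmz
  have huz' : u (n₀ z) = n₀ z := by
    rw [hn₀z]
    exact Hseq_fix_W hs (by omega) hu hfkz
  refine ⟨n₀ * u * n₀⁻¹ * u⁻¹, ?_, ?_, ?_⟩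
  · have h1 : u * n₀⁻¹ * u⁻¹ ∈ N := hnorm u (Hseq_le_V _ hu) n₀⁻¹ (inv_mem hn₀)
    have h2 : n₀ * u * n₀⁻¹ * u⁻¹ = n₀ * (u * n₀⁻¹ * u⁻¹) := by group
    rw [h2]
    exact mul_mem hn₀ h1
  · have h1 : f ^ k * u * (f ^ k)⁻¹ ∈ Mgrp H₁ f := Hseq_le_M _ (Hseq_conj_shift k hu)
    have h2 : n₀ * u * n₀⁻¹ * u⁻¹ = m * (f ^ k * u * (f ^ k)⁻¹) * m⁻¹ * u⁻¹ := by
      rw [he]; group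
    rw [h2]
    exact mul_mem (mul_mem (mul_mem hm h1) (inv_mem hm)) (inv_mem (Hseq_le_M _ hu))
  · intro hone
    have heq : n₀ * u * n₀⁻¹ = u := by
      have := mul_inv_eq_one.mp hone
      exact this
    have h1 : (n₀ * u * n₀⁻¹) (n₀ z) = n₀ (u z) := by
      simp only [Equiv.Perm.mul_apply, Equiv.Perm.inv_apply_self]
    rw [heq, huz'] at h1
    exact huz (n₀.injective h1.symm)

/-- from a nontrivial normal subgroup, extract a nontrivial element of `N ∩ M`. -/
theorem exists_mem_M {N : Subgroup (Equiv.Perm Z)} (hNV : N ≤ H₁ ⊔ Subgroup.zpowers f)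
    (hnorm : ∀ v ∈ H₁ ⊔ Subgroup.zpowers f, ∀ n ∈ N, v * n * v⁻¹ ∈ N) (hNbot : N ≠ ⊥) :
    ∃ n ∈ N, n ∈ Mgrp H₁ f ∧ n ≠ 1 := by
  rcases Subgroup.ne_bot_iff_exists_ne_one.mp hNbot with ⟨⟨n₀, hn₀N⟩, hne⟩
  have hn₀ne : n₀ ≠ 1 := fun h => hne (Subtype.ext h)
  rcases V_decomp (hNV hn₀N) with ⟨m, hm, k, he⟩
  rcases lt_trichotomy k 0 with hk | rfl | hk
  · -- use n₀⁻¹ = (f^(-k) m⁻¹ f^k) * f^(-k)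
    have he' : n₀⁻¹ = (f ^ (-k) * m⁻¹ * (f ^ (-k))⁻¹) * f ^ (-k) := by
      rw [he]; group
    exact case_shift hs hnorm (inv_mem hn₀N) (Mgrp_conj (-k) (inv_mem hm)) (by omega) he'
  · refine ⟨n₀, hn₀N, ?_, hn₀ne⟩
    rw [he, zpow_zero, mul_one]
    exact hm
  · exact case_shift hs hnorm hn₀N hm hk he

/-- the surjection construction: given `nh ∈ N` moving `Y_(j-1)` off itself, a subgroup
of `N` surjects onto `L_j`. -/
theorem surj_construction {N : Subgroup (Equiv.Perm Z)}
    (hnorm : ∀ v ∈ H₁ ⊔ Subgroup.zpowers f, ∀ n ∈ N, v * n * v⁻¹ ∈ N)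
    {nh : Equiv.Perm Z} (hnh : nh ∈ N) {j : ℤ}
    (hdisj : ⇑nh '' YS f Y₀ (j - 1) ∩ YS f Y₀ (j - 1) = ∅) :
    ∃ S : Subgroup (Equiv.Perm Z), S ≤ N ∧
      ∃ φ : S →* Lseq H₁ f j, Function.Surjective φ := by
  classical
  set A := YS f Y₀ (j - 1) with hA
  set L := Lseq H₁ f j with hL
  set gens : Set (Equiv.Perm Z) := {x | ∃ l ∈ L, x = l * nh * l⁻¹ * nh⁻¹} with hgens
  set S := Subgroup.closure gens with hS
  have hSN : S ≤ N := by
    apply Subgroup.closure_le _ |>.mpr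
    rintro x ⟨l, hl, rfl⟩
    exact mul_mem (hnorm l (Lseq_le_V j hl) nh hnh) (inv_mem hnh)
  have hLfix : ∀ l ∈ L, FixOut l A := fun l hl => Lseq_fixOut hs hl
  have hAnh : ∀ z ∈ A, nh⁻¹ z ∉ A := by
    intro z hz hmem
    have : z ∈ ⇑nh '' A ∩ A := ⟨⟨nh⁻¹ z, hmem, nh.apply_inv_self z⟩, hz⟩
    rw [hdisj] at this
    exact this
  have hcfix : ∀ l ∈ L, ∀ z ∈ A, (nh * l * nh⁻¹) z = z := by
    intro l hl z hz
    show nh (l (nh⁻¹ z)) = z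
    rw [hLfix l hl _ (hAnh z hz), nh.apply_inv_self]
  have hgen_agree : ∀ l ∈ L, ∀ z ∈ A, (l * nh * l⁻¹ * nh⁻¹) z = l z := by
    intro l hl z hz
    have h1 : (l * nh * l⁻¹ * nh⁻¹) z = l ((nh * l⁻¹ * nh⁻¹) z) := by
      simp only [Equiv.Perm.mul_apply]
    rw [h1, hcfix l⁻¹ (inv_mem hl) z hz]
  -- main structure claim about S
  have hClaim : ∀ s ∈ S, (∀ z, z ∈ A ↔ s z ∈ A) ∧ ∃ l ∈ L, ∀ z ∈ A, s z = l z := by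
    intro s hs'
    induction hs' using Subgroup.closure_induction with
    | mem x hx =>
      rcases hx with ⟨l, hl, rfl⟩
      constructor
      · intro z
        constructor
        · intro hz
          rw [hgen_agree l hl z hz]
          exact (hLfix l hl).mem_of_mem hz
        · intro hz
          by_contra hzA
          -- z ∉ A implies x z ∉ A
          have hcfix2 : FixOut (nh * l⁻¹ * nh⁻¹) (⇑nh '' A) := (hLfix l⁻¹ (inv_mem hl)).conj
          have hx2 : (l * nh * l⁻¹ * nh⁻¹) z = l ((nh * l⁻¹ * nh⁻¹) z) := by
            simp only [Equiv.Perm.mul_apply]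
          by_cases hzn : z ∈ ⇑nh '' A
          · have h3 : (nh * l⁻¹ * nh⁻¹) z ∈ ⇑nh '' A := hcfix2.mem_of_mem hzn
            have h4 : (nh * l⁻¹ * nh⁻¹) z ∉ A := by
              intro hmem
              have : (nh * l⁻¹ * nh⁻¹) z ∈ ⇑nh '' A ∩ A := ⟨h3, hmem⟩
              rw [hdisj] at this
              exact this
            have h5 : l ((nh * l⁻¹ * nh⁻¹) z) = (nh * l⁻¹ * nh⁻¹) z := hLfix l hl _ h4
            rw [hx2, h5] at hz
            exact h4 hz
          · have h3 : (nh * l⁻¹ * nh⁻¹) z = z := hcfix2 z hzn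
            rw [hx2, h3, hLfix l hl z hzA] at hz
            exact hzA hz
      · exact ⟨l, hl, hgen_agree l hl⟩
    | one => exact ⟨fun z => Iff.rfl, 1, one_mem _, fun z _ => rfl⟩
    | mul x y _ _ hx hy =>
      obtain ⟨hxs, lx, hlx, hxa⟩ := hx
      obtain ⟨hys, ly, hly, hya⟩ := hy
      constructor
      · intro z
        exact (hys z).trans (hxs (y z))
      · refine ⟨lx * ly, mul_mem hlx hly, fun z hz => ?_⟩
        have h1 : (x * y) z = x (y z) := rfl
        have h2 : y z ∈ A := (hys z).mp hz
        rw [h1, hya z hz] at *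
        have h3 : ly z ∈ A := hya z hz ▸ h2
        show x (ly z) = (lx * ly) z
        rw [hxa _ h3]
        rfl
    | inv x _ hx =>
      obtain ⟨hxs, lx, hlx, hxa⟩ := hx
      constructor
      · intro z
        constructor
        · intro hz
          by_contra hmem
          have := (hxs (x⁻¹ z)).mpr (by rw [x.apply_inv_self]; exact hz)
          exact hmem this
        · intro hz
          have := (hxs (x⁻¹ z)).mp hz
          rwa [x.apply_inv_self] at this
      · refine ⟨lx⁻¹, inv_mem hlx, fun z hz => ?_⟩
        have hw : lx⁻¹ z ∈ A := (hLfix lx⁻¹ (inv_mem hlx)).mem_of_mem hz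
        have h1 : x (lx⁻¹ z) = z := by
          rw [hxa _ hw, Equiv.Perm.apply_inv_self]
        exact x.injective (by rw [Equiv.Perm.apply_inv_self, h1])
  have huniq : ∀ l ∈ L, ∀ l' ∈ L, (∀ z ∈ A, l z = l' z) → l = l' := by
    intro l hl l' hl' hag
    exact eq_of_agree_on (hLfix l hl) (hLfix l' hl') hag
  -- definition of φ by choice
  refine ⟨S, hSN, ?_⟩
  have hchoice : ∀ s : S, ∃ l, l ∈ L ∧ ∀ z ∈ A, (s : Equiv.Perm Z) z = l z := by
    intro s
    rcases (hClaim s.1 s.2).2 with ⟨l, hl, ha⟩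
    exact ⟨l, hl, ha⟩
  choose lof hlofL hlofA using hchoice
  refine ⟨MonoidHom.mk' (fun s => ⟨lof s, hlofL s⟩) ?_, ?_⟩
  · intro s t
    apply Subtype.ext
    show lof (s * t) = lof s * lof t
    apply huniq _ (hlofL _) _ (mul_mem (hlofL s) (hlofL t))
    intro z hz
    have h2 : (t : Equiv.Perm Z) z ∈ A := ((hClaim t.1 t.2).1 z).mp hz
    have h3 : lof t z ∈ A := by rw [← hlofA t z hz]; exact h2
    calc lof (s * t) z = ((s * t : S) : Equiv.Perm Z) z := (hlofA (s * t) z hz).symm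
    _ = (s : Equiv.Perm Z) ((t : Equiv.Perm Z) z) := rfl
    _ = (s : Equiv.Perm Z) (lof t z) := by rw [hlofA t z hz]
    _ = lof s (lof t z) := hlofA s _ h3
    _ = (lof s * lof t) z := rfl
  · rintro ⟨l, hl⟩
    have hgenmem : l * nh * l⁻¹ * nh⁻¹ ∈ S := Subgroup.subset_closure ⟨l, hl, rfl⟩
    refine ⟨⟨l * nh * l⁻¹ * nh⁻¹, hgenmem⟩, ?_⟩
    apply Subtype.ext
    show lof _ = l
    apply huniq _ (hlofL _) _ hl
    intro z hz
    rw [← hlofA _ z hz]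
    exact hgen_agree l hl z hz
end Final

end Stmt16Aux

/-- In the inductive setting, with `V = ⟨H₁, f⟩`: every nontrivial
normal subgroup `N` of `V` contains a subgroup that surjects onto `L₀`. -/
theorem stmt16 {Z : Type*} (H₁ : Subgroup (Equiv.Perm Z)) (f : Equiv.Perm Z)
    (Y₀ W₀ : Set Z) (hsetting : InductiveSetting H₁ f Y₀ W₀) :
    ∀ N : Subgroup (Equiv.Perm Z), N ≤ H₁ ⊔ Subgroup.zpowers f →
      (∀ v ∈ H₁ ⊔ Subgroup.zpowers f, ∀ n ∈ N, v * n * v⁻¹ ∈ N) → N ≠ ⊥ →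
      ∃ S : Subgroup (Equiv.Perm Z), S ≤ N ∧
        ∃ φ : S →* Lseq H₁ f 0, Function.Surjective φ := by
  intro N hNV hnorm hNbot
  obtain ⟨n, hnN, hnM, hnne⟩ := Stmt16Aux.exists_mem_M hsetting hNV hnorm hNbot
  obtain ⟨j, c, hcV, hdisj⟩ := Stmt16Aux.Mgrp_moves hsetting hnM hnne
  set A := Stmt16Aux.YS f Y₀ (j - 1) with hA
  set B := ⇑c '' A with hB
  set nh := c⁻¹ * n * c with hnh
  have hnhN : nh ∈ N := by
    have := hnorm c⁻¹ (inv_mem hcV) n hnN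
    rwa [inv_inv] at this
  have hdisj' : ⇑nh '' A ∩ A = ∅ := by
    have h1 : ⇑nh '' A = ⇑c⁻¹ '' (⇑n '' B) := by
      rw [hnh, Stmt16Aux.mul_image, Stmt16Aux.mul_image, hB]
    have h2 : A = ⇑c⁻¹ '' B := by
      rw [hB, ← Set.image_comp]
      have hcomp : ⇑c⁻¹ ∘ ⇑c = id := funext fun z => c.inv_apply_self z
      rw [hcomp, Set.image_id]
    rw [h1]
    rw [h2]
    rw [← Set.image_inter c⁻¹.injective, hdisj, Set.image_empty]
  obtain ⟨S, hSN, φ, hφ⟩ := Stmt16Aux.surj_construction hsetting hnorm hnhN hdisj'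
  exact ⟨S, hSN, (Stmt16Aux.LconjIso H₁ f j).toMonoidHom.comp φ,
    (Stmt16Aux.LconjIso H₁ f j).surjective.comp hφ⟩
end

section
/- Let I = [0,1] and let I₁, I₂, I₃, I₄ be intervals in I with I₁ nonempty, I₁ contained in the interior of I₂, I₂ contained in the interior of I₃ = [a,b], and I₃ contained in the interior of I₄. Let h be a one bump function with bump interval I₃ and with I₂ = [c,d] a fundamental domain of h (i.e., h(c) = d or h(d) = c). Then (I, I₄, ⟨h⟩, I₁) is a pre-wreath structure, where ⟨h⟩ is the cyclic subgroup of the group of bijections of I generated by h. -/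
private lemma invmono (g : Equiv.Perm (Set.Icc (0:ℝ) 1))
    (gmono : StrictMono fun z : Set.Icc (0:ℝ) 1 => ((g z : Set.Icc (0:ℝ) 1) : ℝ)) :
    StrictMono fun z : Set.Icc (0:ℝ) 1 => ((g⁻¹ z : Set.Icc (0:ℝ) 1) : ℝ) := by
  intro u v huv
  have : g⁻¹ u < g⁻¹ v := by
    rw [← gmono.lt_iff_lt]
    simpa using huv
  exact this

private lemma fixed_of_sign (g : Equiv.Perm (Set.Icc (0:ℝ) 1))
    (gmono : StrictMono fun z : Set.Icc (0:ℝ) 1 => ((g z : Set.Icc (0:ℝ) 1) : ℝ))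
    (u w : Set.Icc (0:ℝ) 1) (huw : (u:ℝ) < w)
    (hu : (u:ℝ) < g u) (hw : ((g w : Set.Icc (0:ℝ) 1) : ℝ) < w) :
    ∃ s : Set.Icc (0:ℝ) 1, (u:ℝ) ≤ s ∧ (s:ℝ) ≤ w ∧ g s = s := by
  set T : Set ℝ :=
    Subtype.val '' {z : Set.Icc (0:ℝ) 1 | (u:ℝ) ≤ z ∧ (z:ℝ) ≤ w ∧ (z:ℝ) < g z} with hT
  have huT : (u:ℝ) ∈ T := ⟨u, ⟨le_refl _, le_of_lt huw, hu⟩, rfl⟩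
  have hTne : T.Nonempty := ⟨u, huT⟩
  have hTbdd : BddAbove T := ⟨(w:ℝ), by rintro x ⟨z, ⟨_, hz2, _⟩, rfl⟩; exact hz2⟩
  set s := sSup T with hs
  have hus : (u:ℝ) ≤ s := le_csSup hTbdd huT
  have hsw : s ≤ w := csSup_le hTne (by rintro x ⟨z, ⟨_, hz2, _⟩, rfl⟩; exact hz2)
  have hsmem : s ∈ Set.Icc (0:ℝ) 1 := ⟨le_trans u.2.1 hus, le_trans hsw w.2.2⟩
  set S : Set.Icc (0:ℝ) 1 := ⟨s, hsmem⟩ with hS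
  have h1 : s ≤ g S := by
    apply csSup_le hTne
    rintro x ⟨z, ⟨hz1, hz2, hz3⟩, rfl⟩
    have hzS : z ≤ S := by
      have : (z:ℝ) ≤ s := le_csSup hTbdd ⟨z, ⟨hz1, hz2, hz3⟩, rfl⟩
      exact Subtype.coe_le_coe.mp this
    exact le_of_lt (lt_of_lt_of_le hz3 (gmono.monotone hzS))
  refine ⟨S, hus, hsw, ?_⟩
  by_contra hne
  have h2 : s < g S := lt_of_le_of_ne h1 (fun hEq => hne (Subtype.ext hEq.symm))
  have hsw' : s < w := by
    rcases lt_or_eq_of_le hsw with h' | h'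
    · exact h'
    · exfalso
      have : S = w := Subtype.ext h'
      rw [this] at h2
      have := lt_trans h2 hw
      linarith
  obtain ⟨t, ht1, ht2⟩ := exists_between (lt_min h2 hsw')
  have htw : t < w := lt_of_lt_of_le ht2 (min_le_right _ _)
  have htg : t < (g S : ℝ) := lt_of_lt_of_le ht2 (min_le_left _ _)
  have htmem : t ∈ Set.Icc (0:ℝ) 1 :=
    ⟨le_trans u.2.1 (le_trans hus (le_of_lt ht1)), le_trans (le_of_lt htw) w.2.2⟩
  set Z : Set.Icc (0:ℝ) 1 := ⟨t, htmem⟩ with hZ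
  have hSZ : S < Z := Subtype.mk_lt_mk.mpr ht1
  have : t < (g Z : ℝ) := lt_trans htg (gmono hSZ)
  have htT : t ∈ T := ⟨Z, ⟨le_trans hus (le_of_lt ht1), le_of_lt htw, this⟩, rfl⟩
  exact absurd (le_csSup hTbdd htT) (not_le.mpr ht1)

private lemma stmt18aux (p q c d a b e e' : ℝ)
    (hI₁ : p ≤ q) (hI₁₂ : c < p ∧ q < d) (hI₂₃ : a < c ∧ d < b)
    (hI₃₄ : e < a ∧ b < e') (hI₄ : 0 ≤ e ∧ e' ≤ 1)
    (h : Equiv.Perm (Set.Icc (0 : ℝ) 1))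
    (hmono : StrictMono (fun z : Set.Icc (0 : ℝ) 1 => ((h z : Set.Icc (0 : ℝ) 1) : ℝ)))
    (hfix : ∀ z : Set.Icc (0 : ℝ) 1, (z : ℝ) ∉ Set.Ioo a b → h z = z)
    (hmoves : ∀ z : Set.Icc (0 : ℝ) 1, (z : ℝ) ∈ Set.Ioo a b → h z ≠ z)
    (hc : c ∈ Set.Icc (0 : ℝ) 1) (hd : d ∈ Set.Icc (0 : ℝ) 1)
    (hcd : h ⟨c, hc⟩ = ⟨d, hd⟩) :
    IsPreWreath
      {z : Set.Icc (0 : ℝ) 1 | (z : ℝ) ∈ Set.Icc e e'}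
      (Subgroup.zpowers h)
      {z : Set.Icc (0 : ℝ) 1 | (z : ℝ) ∈ Set.Icc p q} := by
  obtain ⟨hcp, hqd⟩ := hI₁₂
  obtain ⟨hac, hdb⟩ := hI₂₃
  obtain ⟨hea, hbe'⟩ := hI₃₄
  obtain ⟨h0e, he'1⟩ := hI₄
  have hbmem : b ∈ Set.Icc (0:ℝ) 1 := ⟨by linarith, by linarith⟩
  -- the sign is positive: h z > z on (a,b)
  have sign : ∀ z : Set.Icc (0:ℝ) 1, (z:ℝ) ∈ Set.Ioo a b → (z:ℝ) < h z := by
    intro z hz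
    by_contra hle
    push_neg at hle
    have hne : ((h z : Set.Icc (0:ℝ) 1) : ℝ) ≠ z := fun hEq => hmoves z hz (Subtype.ext hEq)
    have hlt : ((h z : Set.Icc (0:ℝ) 1) : ℝ) < z := lt_of_le_of_ne hle hne
    have hCd : ((h ⟨c, hc⟩ : Set.Icc (0:ℝ) 1) : ℝ) = d := by rw [hcd]
    rcases lt_trichotomy (z:ℝ) c with hzc | hzc | hzc
    · -- z < c : use h⁻¹
      have hinv := invmono h hmono
      have hz' : (z:ℝ) < h⁻¹ z := by
        have : z < h⁻¹ z := by
          rw [← hmono.lt_iff_lt]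
          simpa using hlt
        exact Subtype.coe_lt_coe.mpr this
      have hc' : ((h⁻¹ ⟨c, hc⟩ : Set.Icc (0:ℝ) 1) : ℝ) < c := by
        have : h⁻¹ ⟨c, hc⟩ < ⟨c, hc⟩ := by
          rw [← hmono.lt_iff_lt]
          simp only [Equiv.Perm.coe_inv, Equiv.apply_symm_apply]
          rw [hCd]; exact lt_trans hcp (lt_of_le_of_lt hI₁ hqd)
        exact Subtype.coe_lt_coe.mpr this
      obtain ⟨s, hs1, hs2, hs3⟩ := fixed_of_sign h⁻¹ hinv z ⟨c, hc⟩ hzc hz' hc'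
      have : h s = s := by
        have := congrArg h hs3
        rw [Equiv.Perm.coe_inv, Equiv.apply_symm_apply] at this
        exact this.symm
      exact hmoves s ⟨lt_of_lt_of_le hz.1 hs1, lt_of_le_of_lt hs2 (by linarith)⟩ this
    · -- z = c impossible since h c = d > c but h z < z
      rw [hzc] at hlt
      have : z = (⟨c, hc⟩ : Set.Icc (0:ℝ) 1) := Subtype.ext hzc
      rw [this, hCd] at hlt
      linarith
    · -- c < z
      have hcz : ((⟨c, hc⟩ : Set.Icc (0:ℝ) 1) : ℝ) < z := hzc
      have huC : (c:ℝ) < ((h ⟨c, hc⟩ : Set.Icc (0:ℝ) 1) : ℝ) := by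
        rw [hCd]; exact lt_trans hcp (lt_of_le_of_lt hI₁ hqd)
      obtain ⟨s, hs1, hs2, hs3⟩ := fixed_of_sign h hmono ⟨c, hc⟩ z hcz huC hlt
      exact hmoves s ⟨by linarith [hs1], lt_of_le_of_lt hs2 hz.2⟩ hs3
  -- h maps (a,b) into itself
  have mapsIoo : ∀ z : Set.Icc (0:ℝ) 1, (z:ℝ) ∈ Set.Ioo a b →
      ((h z : Set.Icc (0:ℝ) 1) : ℝ) ∈ Set.Ioo a b := by
    intro z hz
    refine ⟨lt_trans hz.1 (sign z hz), ?_⟩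
    have hB : h ⟨b, hbmem⟩ = ⟨b, hbmem⟩ := hfix _ (by simp)
    have : z < (⟨b, hbmem⟩ : Set.Icc (0:ℝ) 1) := Subtype.mk_lt_mk.mpr hz.2
    have := hmono this
    simpa [hB] using this
  -- iterates grow
  have growPow : ∀ (m : ℕ) (z : Set.Icc (0:ℝ) 1), (z:ℝ) ∈ Set.Ioo a b →
      (z:ℝ) ≤ ((h ^ m) z : Set.Icc (0:ℝ) 1) ∧
      (((h ^ m) z : Set.Icc (0:ℝ) 1) : ℝ) ∈ Set.Ioo a b := by
    intro m
    induction m with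
    | zero => intro z hz; simpa using hz
    | succ k ih =>
      intro z hz
      have hstep : ((h ^ (k + 1)) z) = (h ^ k) (h z) := by
        rw [pow_succ, Equiv.Perm.mul_apply]
      obtain ⟨ih1, ih2⟩ := ih (h z) (mapsIoo z hz)
      rw [hstep]
      exact ⟨le_trans (le_of_lt (sign z hz)) ih1, ih2⟩
  -- key claim: for n ≠ 0 and x ∈ [p,q], h^n x ∉ [p,q]
  have claimN : ∀ (m : ℕ), 1 ≤ m → ∀ x : Set.Icc (0:ℝ) 1, (x:ℝ) ∈ Set.Icc p q →
      q < (((h ^ m) x : Set.Icc (0:ℝ) 1) : ℝ) := by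
    intro m hm x hx
    obtain ⟨k, rfl⟩ := Nat.exists_eq_add_of_le hm
    have hxIoo : (x:ℝ) ∈ Set.Ioo a b := ⟨by linarith [hx.1], by linarith [hx.2]⟩
    have hCx : (⟨c, hc⟩ : Set.Icc (0:ℝ) 1) < x := Subtype.mk_lt_mk.mpr (by linarith [hx.1])
    have hdx : d < ((h x : Set.Icc (0:ℝ) 1) : ℝ) := by
      have := hmono hCx
      simpa [hcd] using this
    have hstep : ((h ^ (1 + k)) x) = (h ^ k) (h x) := by
      rw [add_comm, pow_succ, Equiv.Perm.mul_apply]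
    rw [hstep]
    have := (growPow k (h x) (mapsIoo x hxIoo)).1
    linarith
  have claimC : ∀ (n : ℤ), n ≠ 0 → ∀ x : Set.Icc (0:ℝ) 1, (x:ℝ) ∈ Set.Icc p q →
      (((h ^ n) x : Set.Icc (0:ℝ) 1) : ℝ) ∉ Set.Icc p q := by
    intro n hn x hx hmem
    rcases lt_or_gt_of_ne hn with hneg | hpos
    · -- n < 0 : apply claimN to y = h^n x with exponent -n
      set y := (h ^ n) x with hy
      have hinvy : (h ^ (-n)) y = x := by
        rw [hy, ← Equiv.Perm.mul_apply, ← zpow_add, neg_add_cancel, zpow_zero,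
          Equiv.Perm.one_apply]
      obtain ⟨m, hm⟩ : ∃ m : ℕ, (-n) = (m:ℤ) := ⟨(-n).toNat, (Int.toNat_of_nonneg (by omega)).symm⟩
      have hm1 : 1 ≤ m := by omega
      have := claimN m hm1 y hmem
      rw [← zpow_natCast, ← hm, hinvy] at this
      linarith [hx.2]
    · obtain ⟨m, hm⟩ : ∃ m : ℕ, n = (m:ℤ) := ⟨n.toNat, (Int.toNat_of_nonneg (by omega)).symm⟩
      have hm1 : 1 ≤ m := by omega
      have := claimN m hm1 x hx
      rw [← zpow_natCast, ← hm] at this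
      linarith [hmem.2]
  have hpmem : p ∈ Set.Icc (0:ℝ) 1 := ⟨by linarith, by linarith⟩
  have hpIoo : ((⟨p, hpmem⟩ : Set.Icc (0:ℝ) 1) : ℝ) ∈ Set.Ioo a b := ⟨by linarith, by linarith⟩
  refine ⟨?_, ?_, ?_, ?_, ?_, ?_⟩
  · -- nontrivial
    rw [Ne, Subgroup.zpowers_eq_bot]
    intro h1
    exact hmoves ⟨p, hpmem⟩ hpIoo (by rw [h1]; rfl)
  · -- fixes outside Y
    rintro g hg z hz
    obtain ⟨n, rfl⟩ := Subgroup.mem_zpowers_iff.mp hg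
    have hzfix : h z = z := by
      apply hfix
      intro hzin
      exact hz ⟨by linarith [hzin.1], by linarith [hzin.2]⟩
    exact Function.IsFixedPt.perm_zpow hzfix n
  · -- X ⊆ Y
    intro z hz
    exact ⟨by linarith [hz.1], by linarith [hz.2]⟩
  · -- X nonempty
    exact ⟨⟨p, hpmem⟩, le_refl p, hI₁⟩
  · -- condition (ii)
    rintro g hg ⟨w, ⟨x₀, hx₀, rfl⟩, hw⟩ x hx
    obtain ⟨n, rfl⟩ := Subgroup.mem_zpowers_iff.mp hg
    rcases eq_or_ne n 0 with rfl | hn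
    · simp
    · exact absurd hw (claimC n hn x₀ hx₀)
  · -- condition (iii)
    rintro g hg hgne
    obtain ⟨n, rfl⟩ := Subgroup.mem_zpowers_iff.mp hg
    have hn : n ≠ 0 := by rintro rfl; exact hgne (zpow_zero h)
    refine ⟨1, Subgroup.one_mem _, ?_⟩
    simp only [Equiv.Perm.coe_one, Set.image_id]
    intro hEq
    have hPin : (⟨p, hpmem⟩ : Set.Icc (0:ℝ) 1) ∈
        {z : Set.Icc (0:ℝ) 1 | (z : ℝ) ∈ Set.Icc p q} := ⟨le_refl p, hI₁⟩
    have : (h ^ n) ⟨p, hpmem⟩ ∈ {z : Set.Icc (0:ℝ) 1 | (z : ℝ) ∈ Set.Icc p q} := by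
      rw [← hEq]; exact ⟨_, hPin, rfl⟩
    exact claimC n hn ⟨p, hpmem⟩ ⟨le_refl p, hI₁⟩ this

/-- Let `I = [0,1]` and let `I₁ = [p,q]`, `I₂ = [c,d]`, `I₃ = [a,b]`,
`I₄ = [e,e']` be intervals in `I` with `I₁` nonempty, `I₁` in the interior of `I₂`,
`I₂` in the interior of `I₃`, and `I₃` in the interior of `I₄`.  If `h` is a one bump
function (an orientation-preserving self-bijection of `I`) with bump interval `I₃` and
fundamental domain `I₂` (i.e. `h(c) = d` or `h(d) = c`), then `(I, I₄, ⟨h⟩, I₁)` is a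
pre-wreath structure. -/
theorem stmt18 (p q c d a b e e' : ℝ)
    (hI₁ : p ≤ q) (hI₁₂ : c < p ∧ q < d) (hI₂₃ : a < c ∧ d < b)
    (hI₃₄ : e < a ∧ b < e') (hI₄ : 0 ≤ e ∧ e' ≤ 1)
    (h : Equiv.Perm (Set.Icc (0 : ℝ) 1))
    (hmono : StrictMono (fun z : Set.Icc (0 : ℝ) 1 => ((h z : Set.Icc (0 : ℝ) 1) : ℝ)))
    (hfix : ∀ z : Set.Icc (0 : ℝ) 1, (z : ℝ) ∉ Set.Ioo a b → h z = z)
    (hmoves : ∀ z : Set.Icc (0 : ℝ) 1, (z : ℝ) ∈ Set.Ioo a b → h z ≠ z)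
    (hfund : ∃ (hc : c ∈ Set.Icc (0 : ℝ) 1) (hd : d ∈ Set.Icc (0 : ℝ) 1),
      h ⟨c, hc⟩ = ⟨d, hd⟩ ∨ h ⟨d, hd⟩ = ⟨c, hc⟩) :
    IsPreWreath
      {z : Set.Icc (0 : ℝ) 1 | (z : ℝ) ∈ Set.Icc e e'}
      (Subgroup.zpowers h)
      {z : Set.Icc (0 : ℝ) 1 | (z : ℝ) ∈ Set.Icc p q} := by
  obtain ⟨hc, hd, hcase⟩ := hfund
  rcases hcase with hcd | hdc
  · exact stmt18aux p q c d a b e e' hI₁ hI₁₂ hI₂₃ hI₃₄ hI₄ h hmono hfix hmoves hc hd hcd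
  · have hinvmono := invmono h hmono
    have hinvfix : ∀ z : Set.Icc (0 : ℝ) 1, (z : ℝ) ∉ Set.Ioo a b → h⁻¹ z = z := by
      intro z hz
      conv_lhs => rw [← hfix z hz]
      exact Equiv.symm_apply_apply h z
    have hinvmoves : ∀ z : Set.Icc (0 : ℝ) 1, (z : ℝ) ∈ Set.Ioo a b → h⁻¹ z ≠ z := by
      intro z hz hEq
      exact hmoves z hz (by conv_lhs => rw [← hEq]; rw [Equiv.Perm.coe_inv, Equiv.apply_symm_apply])
    have hinvcd : h⁻¹ ⟨c, hc⟩ = ⟨d, hd⟩ := by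
      rw [← hdc]; exact (Equiv.symm_apply_apply h _)
    have := stmt18aux p q c d a b e e' hI₁ hI₁₂ hI₂₃ hI₃₄ hI₄ h⁻¹ hinvmono hinvfix
      hinvmoves hc hd hinvcd
    rwa [Subgroup.zpowers_inv] at this
end
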